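/- arXiv:2201.01507 — 6 statements merged into one kernel-verified Lean document; each statement's English description precedes it below -/
import Mathlib

section
/- Hartogs extension theorem: Let E be a complex Banach space, let Δ be the open unit ball (disk) of ℂ, let K ⊆ Δ be a compact set, let U ⊆ E be a nonempty open connected set, and let A ⊆ U be a nonempty open set. Set V := ((Δ \ K) ×ˢ U) ∪ (Δ ×ˢ A) ⊆ ℂ × E (an open set). If f : ℂ × E → ℂ is complex differentiable at every point of V, then there exists F : ℂ × E → ℂ that is complex differentiable at every point of Δ ×ˢ U and agrees with f on V. -/
open Metric Set Complex Real intervalIntegral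

section aux
variable {G : Type*} [NormedAddCommGroup G] [NormedSpace ℂ G]

lemma line_hasDerivAt (p v : G) (t : ℂ) : HasDerivAt (fun t : ℂ => p + t • v) v t := by
  simpa using ((hasDerivAt_id t).smul_const v).const_add p

/-- Cauchy estimate for the Fréchet derivative of a holomorphic function on a Banach domain. -/
lemma cauchy_fderiv_norm_le {g : G → ℂ} {s : Set G} (hs : IsOpen s)
    (hg : DifferentiableOn ℂ g s) {p : G} {δ M : ℝ} (hδ : 0 < δ)
    (hsub : closedBall p δ ⊆ s) (hM : ∀ x ∈ closedBall p δ, ‖g x‖ ≤ M) :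
    ‖fderiv ℂ g p‖ ≤ M / δ := by
  have hM0 : 0 ≤ M := (norm_nonneg _).trans (hM p (mem_closedBall_self hδ.le))
  refine ContinuousLinearMap.opNorm_le_bound _ (div_nonneg hM0 hδ.le) fun v => ?_
  rcases eq_or_ne v 0 with rfl | hv
  · simp
  have hv0 : (0:ℝ) < ‖v‖ := norm_pos_iff.2 hv
  set R : ℝ := δ / ‖v‖ with hR
  have hRpos : 0 < R := div_pos hδ hv0
  have himg : ∀ t : ℂ, ‖t‖ ≤ R → p + t • v ∈ closedBall p δ := by
    intro t ht
    simp only [mem_closedBall, dist_eq_norm, add_sub_cancel_left, norm_smul]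
    calc ‖t‖ * ‖v‖ ≤ R * ‖v‖ := by gcongr
      _ = δ := div_mul_cancel₀ _ hv0.ne'
  set h : ℂ → ℂ := fun t => g (p + t • v) with hh
  have hdiffat : ∀ t : ℂ, ‖t‖ ≤ R → HasDerivAt h (fderiv ℂ g (p + t • v) v) t := by
    intro t ht
    have hgat : DifferentiableAt ℂ g (p + t • v) :=
      hg.differentiableAt (hs.mem_nhds (hsub (himg t ht)))
    exact hgat.hasFDerivAt.comp_hasDerivAt t (line_hasDerivAt p v t)
  have hdc : DiffContOnCl ℂ h (ball 0 R) := by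
    refine ⟨fun t ht => ?_, ?_⟩
    · have ht' : ‖t‖ ≤ R := by rw [mem_ball, dist_zero_right] at ht; exact ht.le
      exact ((hdiffat t ht').differentiableAt).differentiableWithinAt
    · rw [closure_ball (0:ℂ) hRpos.ne']
      refine hg.continuousOn.comp (Continuous.continuousOn (by continuity)) fun t ht => ?_
      rw [mem_closedBall, dist_zero_right] at ht
      exact hsub (himg t ht)
  have hsphere : ∀ t ∈ sphere (0:ℂ) R, ‖h t‖ ≤ M := fun t ht => by
    rw [mem_sphere, dist_zero_right] at ht
    exact hM _ (himg t ht.le)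
  have key := Complex.norm_deriv_le_of_forall_mem_sphere_norm_le hRpos hdc hsphere
  have hderiv0 : deriv h 0 = fderiv ℂ g p v := by
    have h0 := hdiffat 0 (by simpa using hRpos.le)
    simpa using h0.deriv
  rw [hderiv0] at key
  calc ‖fderiv ℂ g p v‖ ≤ M / R := key
    _ = M / δ * ‖v‖ := by
        rw [hR, div_div_eq_mul_div, div_mul_eq_mul_div]

/-- The Fréchet derivative of a holomorphic function is continuous (Banach domain). -/
lemma fderiv_continuousOn_of_differentiableOn {g : G → ℂ} {s : Set G} (hs : IsOpen s)
    (hg : DifferentiableOn ℂ g s) : ContinuousOn (fderiv ℂ g) s := by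
  refine fun q₂ hq₂ => (?_ : ContinuousAt _ _).continuousWithinAt
  rw [Metric.continuousAt_iff]
  intro ε hε
  set D₂ := fderiv ℂ g q₂ with hD₂
  have hgq₂ : HasFDerivAt g D₂ q₂ := (hg.differentiableAt (hs.mem_nhds hq₂)).hasFDerivAt
  have hlo := hgq₂.isLittleO.def (show (0:ℝ) < ε/4 by positivity)
  rw [Metric.eventually_nhds_iff] at hlo
  obtain ⟨δ₁, hδ₁pos, hδ₁⟩ := hlo
  obtain ⟨δ₂, hδ₂pos, hδ₂⟩ := Metric.isOpen_iff.1 hs q₂ hq₂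
  set δ : ℝ := min (δ₁/4) (δ₂/4) with hδdef
  have hδpos : 0 < δ := lt_min (by positivity) (by positivity)
  refine ⟨δ, hδpos, fun {q₁} hq₁ => ?_⟩
  have hball : closedBall q₁ δ ⊆ s := by
    intro x hx
    refine hδ₂ ?_
    rw [mem_ball]
    calc dist x q₂ ≤ dist x q₁ + dist q₁ q₂ := dist_triangle _ _ _
      _ < δ + δ := add_lt_add_of_le_of_lt (mem_closedBall.1 hx) hq₁
      _ ≤ δ₂/4 + δ₂/4 := add_le_add (min_le_right _ _) (min_le_right _ _)
      _ < δ₂ := by linarith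
  set h : G → ℂ := fun x => g x - (g q₂ + D₂ (x - q₂)) with hhdef
  have haff : HasFDerivAt (fun x => g q₂ + D₂ (x - q₂)) D₂ q₁ := by
    have h2 : HasFDerivAt (fun x : G => g q₂ + (D₂ x - D₂ q₂)) D₂ q₁ :=
      ((D₂.hasFDerivAt).sub_const (D₂ q₂)).const_add (g q₂)
    simpa only [map_sub] using h2
  have hhd : DifferentiableOn ℂ h s := by
    intro x hx
    exact ((hg.differentiableAt (hs.mem_nhds hx)).sub
      (((D₂.differentiable.comp (differentiable_id.sub_const q₂)).const_add
        (g q₂)).differentiableAt)).differentiableWithinAt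
  have hMb : ∀ x ∈ closedBall q₁ δ, ‖h x‖ ≤ ε/4 * (2*δ) := by
    intro x hx
    have hxq₂ : dist x q₂ < δ₁ := by
      calc dist x q₂ ≤ dist x q₁ + dist q₁ q₂ := dist_triangle _ _ _
        _ < δ + δ := add_lt_add_of_le_of_lt (mem_closedBall.1 hx) hq₁
        _ ≤ δ₁/4 + δ₁/4 := add_le_add (min_le_left _ _) (min_le_left _ _)
        _ < δ₁ := by linarith
    have hb := hδ₁ hxq₂
    have hxq₂' : ‖x - q₂‖ ≤ 2*δ := by
      rw [← dist_eq_norm]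
      calc dist x q₂ ≤ dist x q₁ + dist q₁ q₂ := dist_triangle _ _ _
        _ ≤ δ + δ := add_le_add (mem_closedBall.1 hx) hq₁.le
        _ = 2*δ := by ring
    calc ‖h x‖ = ‖g x - g q₂ - D₂ (x - q₂)‖ := by rw [hhdef]; ring_nf
      _ ≤ ε/4 * ‖x - q₂‖ := hb
      _ ≤ ε/4 * (2*δ) := by gcongr
  have hkey := cauchy_fderiv_norm_le hs hhd hδpos hball hMb
  have hfd : fderiv ℂ h q₁ = fderiv ℂ g q₁ - D₂ :=
    (((hg.differentiableAt (hs.mem_nhds (hball (mem_closedBall_self hδpos.le)))).hasFDerivAt.sub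
      haff).fderiv)
  rw [hfd] at hkey
  have : ε/4 * (2*δ) / δ = ε/2 := by field_simp; ring
  rw [this] at hkey
  calc dist (fderiv ℂ g q₁) (fderiv ℂ g q₂) = ‖fderiv ℂ g q₁ - D₂‖ := by rw [dist_eq_norm, hD₂]
    _ ≤ ε/2 := hkey
    _ < ε := by linarith

lemma eqOn_zero_ball {g : G → ℂ} {w₀ : G} {ρ δ : ℝ} (hρ : 0 < ρ)
    (hg : DifferentiableOn ℂ g (ball w₀ δ)) (h0 : EqOn g 0 (ball w₀ ρ)) :
    EqOn g 0 (ball w₀ δ) := by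
  intro x hx
  rcases eq_or_ne x w₀ with rfl | hxw
  · exact h0 (mem_ball_self hρ)
  set v := x - w₀ with hv
  have hv0 : (0:ℝ) < ‖v‖ := by
    rw [norm_pos_iff]
    exact sub_ne_zero.2 hxw
  have hvδ : ‖v‖ < δ := by rw [hv, ← dist_eq_norm]; exact mem_ball.1 hx
  set R := δ / ‖v‖ with hRdef
  have hR1 : 1 < R := (one_lt_div hv0).2 hvδ
  have hRpos : 0 < R := lt_trans one_pos hR1
  have hmaps : ∀ t : ℂ, ‖t‖ < R → w₀ + t • v ∈ ball w₀ δ := by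
    intro t ht
    simp only [mem_ball, dist_eq_norm, add_sub_cancel_left, norm_smul]
    calc ‖t‖ * ‖v‖ < R * ‖v‖ := by gcongr
      _ = δ := div_mul_cancel₀ _ hv0.ne'
  set h : ℂ → ℂ := fun t => g (w₀ + t • v) with hh
  have hhd : DifferentiableOn ℂ h (ball 0 R) := by
    intro t ht
    have htR : ‖t‖ < R := by rwa [mem_ball, dist_zero_right] at ht
    have hg' : DifferentiableAt ℂ g (w₀ + t • v) :=
      hg.differentiableAt (isOpen_ball.mem_nhds (hmaps t htR))
    exact (hg'.comp t (line_hasDerivAt w₀ v t).differentiableAt).differentiableWithinAt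
  have han : AnalyticOnNhd ℂ h (ball 0 R) := hhd.analyticOnNhd isOpen_ball
  have hev : h =ᶠ[nhds 0] 0 := by
    filter_upwards [Metric.ball_mem_nhds (0:ℂ) (div_pos hρ hv0)] with t ht
    have : w₀ + t • v ∈ ball w₀ ρ := by
      rw [mem_ball, dist_zero_right] at ht
      simp only [mem_ball, dist_eq_norm, add_sub_cancel_left, norm_smul]
      calc ‖t‖ * ‖v‖ < ρ / ‖v‖ * ‖v‖ := by gcongr
        _ = ρ := div_mul_cancel₀ _ hv0.ne'
    simpa using h0 this
  have heq := han.eqOn_zero_of_preconnected_of_eventuallyEq_zero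
    (convex_ball (0:ℂ) R).isPreconnected (mem_ball_self hRpos) hev
  have h1 := heq (show (1:ℂ) ∈ ball 0 R by rw [mem_ball, dist_zero_right]; simpa using hR1)
  simpa [hh, hv] using h1

/-- Identity theorem on a Banach domain: a holomorphic function vanishing on a nonempty open
subset of an open preconnected set vanishes everywhere. -/
lemma eqOn_zero_of_preconnected_of_eqOn_zero {g : G → ℂ} {U A : Set G} (hUopen : IsOpen U)
    (hconn : IsPreconnected U) (hg : DifferentiableOn ℂ g U) (hAopen : IsOpen A)
    (hAne : A.Nonempty) (hAU : A ⊆ U) (h0 : EqOn g 0 A) : EqOn g 0 U := by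
  set S := {w | w ∈ U ∧ ∃ ρ > 0, EqOn g 0 (ball w ρ)} with hSdef
  have hSopen : IsOpen S := by
    rw [isOpen_iff_mem_nhds]
    rintro w ⟨hwU, ρ, hρ, hEq⟩
    filter_upwards [(hUopen.inter isOpen_ball).mem_nhds ⟨hwU, mem_ball_self hρ⟩] with w' hw'
    refine ⟨hw'.1, ρ - dist w' w, by simpa [sub_pos] using hw'.2, fun y hy => hEq ?_⟩
    rw [mem_ball] at hy ⊢
    calc dist y w ≤ dist y w' + dist w' w := dist_triangle _ _ _
      _ < ρ - dist w' w + dist w' w := by gcongr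
      _ = ρ := by ring
  have hclosure : U ∩ closure S ⊆ S := by
    rintro w ⟨hwU, hwcl⟩
    obtain ⟨δ', hδ'pos, hδ'⟩ := Metric.isOpen_iff.1 hUopen w hwU
    set δ := δ'/2 with hδdef
    have hδpos : 0 < δ := by positivity
    obtain ⟨w₀, hw₀S, hw₀d⟩ := Metric.mem_closure_iff.1 hwcl δ hδpos
    obtain ⟨_, ρ₀, hρ₀, hEq₀⟩ := hw₀S
    have hballU : ball w₀ δ ⊆ U := by
      intro y hy
      refine hδ' ?_
      rw [mem_ball] at hy ⊢
      calc dist y w ≤ dist y w₀ + dist w₀ w := dist_triangle _ _ _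
        _ < δ + δ := by rw [dist_comm w₀ w]; exact add_lt_add hy hw₀d
        _ = δ' := by rw [hδdef]; ring
    have hEqδ : EqOn g 0 (ball w₀ δ) :=
      eqOn_zero_ball (lt_min hρ₀ hδpos) (hg.mono hballU)
        (fun y hy => hEq₀ (mem_ball.2 ((mem_ball.1 hy).trans_le (min_le_left _ _))))
    refine ⟨hwU, δ - dist w w₀, by simpa [sub_pos] using hw₀d, fun y hy => hEqδ ?_⟩
    rw [mem_ball] at hy ⊢
    calc dist y w₀ ≤ dist y w + dist w w₀ := dist_triangle _ _ _
      _ < δ - dist w w₀ + dist w w₀ := by gcongr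
      _ = δ := by ring
  have hUS : U ⊆ S := by
    obtain ⟨a, ha⟩ := hAne
    have haS : a ∈ S := by
      obtain ⟨ρ, hρpos, hρsub⟩ := Metric.isOpen_iff.1 hAopen a ha
      exact ⟨hAU ha, ρ, hρpos, fun y hy => h0 (hρsub hy)⟩
    have hsub : U ⊆ S ∪ (closure S)ᶜ := by
      intro x hx
      by_cases hxc : x ∈ closure S
      · exact Or.inl (hclosure ⟨hx, hxc⟩)
      · exact Or.inr hxc
    have hdisj : U ∩ (S ∩ (closure S)ᶜ) = ∅ := by
      ext x
      simp only [mem_inter_iff, mem_compl_iff, mem_empty_iff_false, iff_false, not_and]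
      exact fun _ hxS hxc => hxc (subset_closure hxS)
    rcases isPreconnected_iff_subset_of_disjoint.1 hconn S (closure S)ᶜ hSopen
        isClosed_closure.isOpen_compl hsub hdisj with h | h
    · exact h
    · exact absurd (subset_closure haS) (h (hAU ha))
  intro w hw
  obtain ⟨_, ρ, hρ, hEq⟩ := hUS hw
  exact hEq (mem_ball_self hρ)

end aux

/-- Hartogs extension theorem (Remark 1.3f): a function holomorphic on
`((Δ \ K) ×ˢ U) ∪ (Δ ×ˢ A)` extends holomorphically to `Δ ×ˢ U`. -/
theorem hartogs_extension {E : Type*} [NormedAddCommGroup E] [NormedSpace ℂ E]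
    [CompleteSpace E]
    (K : Set ℂ) (hK : IsCompact K) (hKsub : K ⊆ ball (0 : ℂ) 1)
    (U : Set E) (hUopen : IsOpen U) (hUconn : IsConnected U) (hUne : U.Nonempty)
    (A : Set E) (hAopen : IsOpen A) (hAne : A.Nonempty) (hAU : A ⊆ U)
    (f : ℂ × E → ℂ)
    (hf : DifferentiableOn ℂ f (((ball (0 : ℂ) 1 \ K) ×ˢ U) ∪ (ball (0 : ℂ) 1 ×ˢ A))) :
    ∃ F : ℂ × E → ℂ, DifferentiableOn ℂ F (ball (0 : ℂ) 1 ×ˢ U) ∧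
      EqOn F f (((ball (0 : ℂ) 1 \ K) ×ˢ U) ∪ (ball (0 : ℂ) 1 ×ˢ A)) := by
  classical
  obtain ⟨r', hr'0, hr'1, hKr'⟩ : ∃ r' : ℝ, 0 < r' ∧ r' < 1 ∧ K ⊆ ball (0:ℂ) r' := by
    rcases K.eq_empty_or_nonempty with rfl | hKne
    · exact ⟨1/2, by norm_num, by norm_num, empty_subset _⟩
    · obtain ⟨k, hkK, hk⟩ := hK.exists_isMaxOn hKne continuous_norm.continuousOn
      have hm1 : ‖k‖ < 1 := by simpa [mem_ball, dist_zero_right] using hKsub hkK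
      have hm0 : (0:ℝ) ≤ ‖k‖ := norm_nonneg _
      refine ⟨(‖k‖+1)/2, by linarith, by linarith, fun x hx => ?_⟩
      rw [mem_ball, dist_zero_right]
      have hxk : ‖x‖ ≤ ‖k‖ := hk hx
      linarith
  set r : ℝ := (r' + 1)/2 with hrdef
  have hr'r : r' < r := by rw [hrdef]; linarith
  have hr1 : r < 1 := by rw [hrdef]; linarith
  have hr0 : 0 < r := hr'0.trans hr'r
  set D := ((ball (0:ℂ) 1 \ K) ×ˢ U) ∪ ((ball (0:ℂ) 1) ×ˢ A) with hDdef
  have hDopen : IsOpen D :=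
    ((isOpen_ball.sdiff hK.isClosed).prod hUopen).union (isOpen_ball.prod hAopen)
  have hann : ∀ ζ : ℂ, r' < ‖ζ‖ → ‖ζ‖ < 1 → ζ ∈ ball (0:ℂ) 1 \ K := by
    intro ζ h1 h2
    refine ⟨by simpa [mem_ball, dist_zero_right] using h2, fun hζK => ?_⟩
    have := hKr' hζK
    rw [mem_ball, dist_zero_right] at this
    linarith
  set F : ℂ × E → ℂ := fun p => (2 * π * I : ℂ)⁻¹ • ∮ ζ in C(0, r), (ζ - p.1)⁻¹ • f (ζ, p.2)
    with hFdef
  set Φ : ℂ × (ℂ × E) → ℂ := fun q => (q.1 - q.2.1)⁻¹ * f (q.1, q.2.2) with hΦdef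
  set Ω : Set (ℂ × (ℂ × E)) :=
    {q | q.1 ≠ q.2.1} ∩ (fun q : ℂ × (ℂ × E) => (q.1, q.2.2)) ⁻¹' D with hΩdef
  have hproj : Continuous fun q : ℂ × (ℂ × E) => (q.1, q.2.2) :=
    continuous_fst.prodMk continuous_snd.snd
  have hΩopen : IsOpen Ω :=
    (isOpen_ne_fun continuous_fst continuous_snd.fst).inter (hDopen.preimage hproj)
  have hΦdiff : DifferentiableOn ℂ Φ Ω := by
    rintro q hq
    have h1 : DifferentiableAt ℂ (fun q : ℂ × (ℂ × E) => (q.1 - q.2.1)⁻¹) q :=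
      (differentiableAt_fst.sub differentiableAt_snd.fst).inv (sub_ne_zero.2 hq.1)
    have h2 : DifferentiableAt ℂ (fun q : ℂ × (ℂ × E) => f (q.1, q.2.2)) q :=
      (hf.differentiableAt (hDopen.mem_nhds hq.2)).comp q
        (differentiableAt_fst.prodMk differentiableAt_snd.snd)
    exact (h1.mul h2).differentiableWithinAt
  -- Part 1 : joint differentiability of F on ball 0 r ×ˢ U
  have hFdiff : ∀ p : ℂ × E, p.1 ∈ ball (0:ℂ) r → p.2 ∈ U → DifferentiableAt ℂ F p := by
    rintro ⟨z₀, w₀⟩ hz₀ hw₀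
    have hz₀r : ‖z₀‖ < r := by simpa [mem_ball, dist_zero_right] using hz₀
    obtain ⟨ηU, hηU0, hηU⟩ : ∃ ηU > 0, closedBall w₀ ηU ⊆ U := by
      obtain ⟨ε, hε0, hε⟩ := Metric.isOpen_iff.1 hUopen w₀ hw₀
      exact ⟨ε/2, by positivity, (closedBall_subset_ball (by linarith)).trans hε⟩
    set C₀ : Set (ℂ × E) := (sphere (0:ℂ) r) ×ˢ ({w₀} : Set E) with hC₀def
    have hC₀comp : IsCompact C₀ := (isCompact_sphere _ _).prod isCompact_singleton
    have hC₀D : C₀ ⊆ D := by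
      rintro ⟨ζ, w⟩ ⟨hζ, hw⟩
      rw [mem_sphere, dist_zero_right] at hζ
      rcases hw with rfl
      exact Or.inl ⟨hann ζ (by rw [hζ]; exact hr'r) (by rw [hζ]; exact hr1), hw₀⟩
    obtain ⟨M₀, hM₀⟩ := hC₀comp.exists_bound_of_continuousOn (hf.continuousOn.mono hC₀D)
    set M : ℝ := M₀ + 1 with hMdef
    have hV'open : IsOpen (D ∩ (fun q : ℂ × E => ‖f q‖) ⁻¹' Iio M) :=
      (continuous_norm.comp_continuousOn hf.continuousOn).isOpen_inter_preimage
        hDopen isOpen_Iio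
    have hC₀V' : C₀ ⊆ D ∩ (fun q : ℂ × E => ‖f q‖) ⁻¹' Iio M := fun q hq =>
      ⟨hC₀D hq, lt_of_le_of_lt (hM₀ q hq) (by rw [hMdef]; linarith)⟩
    obtain ⟨δ₀, hδ₀pos, hδ₀⟩ := hC₀comp.exists_thickening_subset_open hV'open hC₀V'
    obtain ⟨η, hη0, hη1, hη2, hη3, hη4, hη5⟩ :
        ∃ η : ℝ, 0 < η ∧ 4*η ≤ r - ‖z₀‖ ∧ 2*η ≤ ηU ∧ 2*η ≤ 1 - r ∧ 2*η ≤ r - r' ∧ 2*η < δ₀ := by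
      set m := min (min ((r-‖z₀‖)/4) (ηU/2)) (min (min ((1-r)/2) ((r-r')/2)) (δ₀/4)) with hm
      have e1 : m ≤ (r-‖z₀‖)/4 := (min_le_left _ _).trans (min_le_left _ _)
      have e2 : m ≤ ηU/2 := (min_le_left _ _).trans (min_le_right _ _)
      have e3 : m ≤ (1-r)/2 := (min_le_right _ _).trans ((min_le_left _ _).trans (min_le_left _ _))
      have e4 : m ≤ (r-r')/2 := (min_le_right _ _).trans ((min_le_left _ _).trans (min_le_right _ _))
      have e5 : m ≤ δ₀/4 := (min_le_right _ _).trans (min_le_right _ _)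
      have hm0 : 0 < m := by
        refine lt_min (lt_min (by linarith) (by positivity)) (lt_min (lt_min ?_ ?_) ?_)
        · linarith
        · linarith
        · positivity
      exact ⟨m, hm0, by linarith, by linarith, by linarith, by linarith, by linarith⟩
    have hreg : ∀ q : ℂ × (ℂ × E), r - η ≤ ‖q.1‖ → ‖q.1‖ ≤ r + η →
        ‖q.2.1 - z₀‖ ≤ 2*η → ‖q.2.2 - w₀‖ ≤ 2*η → q ∈ Ω := by
      rintro ⟨ζ, z, w⟩ h1 h2 h3 h4
      have hζ1 : r' < ‖ζ‖ := by linarith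
      have hζ2 : ‖ζ‖ < 1 := by linarith
      have hz : ‖z‖ ≤ ‖z₀‖ + 2*η := by
        calc ‖z‖ = ‖z₀ + (z - z₀)‖ := by ring_nf
          _ ≤ ‖z₀‖ + ‖z - z₀‖ := norm_add_le _ _
          _ ≤ ‖z₀‖ + 2*η := by linarith
      have hne : ζ ≠ z := by
        intro h
        rw [← h] at hz
        linarith
      exact ⟨hne, Or.inl ⟨hann ζ hζ1 hζ2,
        hηU (mem_closedBall.2 (by rw [dist_eq_norm]; linarith))⟩⟩
    have hΦbound : ∀ q : ℂ × (ℂ × E), r - η ≤ ‖q.1‖ → ‖q.1‖ ≤ r + η →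
        ‖q.2.1 - z₀‖ ≤ 2*η → ‖q.2.2 - w₀‖ ≤ 2*η → ‖Φ q‖ ≤ M/η := by
      rintro ⟨ζ, z, w⟩ h1 h2 h3 h4
      have hζ0 : (0:ℝ) < ‖ζ‖ := by linarith
      have hfb : ‖f (ζ, w)‖ ≤ M := by
        have hmem : (ζ, w) ∈ thickening δ₀ C₀ := by
          rw [Metric.mem_thickening_iff]
          refine ⟨((r/‖ζ‖ : ℝ) • ζ, w₀), ⟨?_, rfl⟩, ?_⟩
          · rw [mem_sphere, dist_zero_right, norm_smul, Real.norm_eq_abs, abs_div,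
              abs_of_pos hr0, abs_of_pos hζ0]
            rw [div_mul_eq_mul_div, mul_div_assoc, div_self hζ0.ne', mul_one]
          · rw [Prod.dist_eq]
            have d1 : dist ζ ((r/‖ζ‖ : ℝ) • ζ) ≤ η := by
              rw [dist_eq_norm]
              have e : ζ - (r/‖ζ‖ : ℝ) • ζ = ((1 - r/‖ζ‖ : ℝ)) • ζ := by
                rw [sub_smul, one_smul]
              rw [e, norm_smul, Real.norm_eq_abs]
              have hmul : (1 - r/‖ζ‖) * ‖ζ‖ = ‖ζ‖ - r := by
                have hne : (‖ζ‖ : ℝ) ≠ 0 := hζ0.ne'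
                field_simp [hne]
              have e2 : |1 - r/‖ζ‖| * ‖ζ‖ = |‖ζ‖ - r| := by
                calc |1 - r/‖ζ‖| * ‖ζ‖ = |1 - r/‖ζ‖| * |‖ζ‖| := by rw [abs_of_pos hζ0]
                  _ = |(1 - r/‖ζ‖) * ‖ζ‖| := (abs_mul _ _).symm
                  _ = |‖ζ‖ - r| := by rw [hmul]
              rw [e2, abs_le]
              constructor <;> linarith
            have d2 : dist w w₀ ≤ 2*η := by rw [dist_eq_norm]; exact h4
            calc max (dist ζ ((r/‖ζ‖ : ℝ) • ζ)) (dist w w₀) ≤ max η (2*η) :=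
                max_le_max d1 d2
              _ = 2*η := max_eq_right (by linarith)
              _ < δ₀ := hη5
        exact ((hδ₀ hmem).2).le
      have hz : ‖z‖ ≤ ‖z₀‖ + 2*η := by
        calc ‖z‖ = ‖z₀ + (z - z₀)‖ := by ring_nf
          _ ≤ ‖z₀‖ + ‖z - z₀‖ := norm_add_le _ _
          _ ≤ ‖z₀‖ + 2*η := by linarith
      have hlow : η ≤ ‖ζ - z‖ := by
        have := norm_sub_norm_le ζ z
        linarith [norm_sub_norm_le ζ z]
      have hinv : ‖(ζ - z)⁻¹‖ ≤ 1/η := by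
        rw [norm_inv, inv_eq_one_div]
        exact one_div_le_one_div_of_le hη0 hlow
      have hM0 : 0 ≤ M := (norm_nonneg _).trans hfb
      calc ‖Φ (ζ, z, w)‖ = ‖(ζ - z)⁻¹‖ * ‖f (ζ, w)‖ := norm_mul _ _
        _ ≤ (1/η) * M := mul_le_mul hinv hfb (norm_nonneg _) (by positivity)
        _ = M/η := by ring
    -- fderiv bound near the path
    have hfdb : ∀ θ : ℝ, ∀ x : ℂ × E, dist x (z₀, w₀) ≤ η →
        ‖fderiv ℂ Φ (circleMap 0 r θ, x)‖ ≤ M/η/η := by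
      intro θ x hx
      obtain ⟨hxz, hxw⟩ : dist x.1 z₀ ≤ η ∧ dist x.2 w₀ ≤ η := by
        rw [Prod.dist_eq, max_le_iff] at hx; exact hx
      have hcm : ‖circleMap 0 r θ‖ = r := by
        simpa [abs_of_pos hr0] using norm_circleMap_zero r θ
      have hsub : closedBall (circleMap 0 r θ, x) η ⊆ Ω := by
        intro y hy
        rw [mem_closedBall, Prod.dist_eq, max_le_iff] at hy
        obtain ⟨hy1, hy2⟩ := hy
        rw [Prod.dist_eq, max_le_iff] at hy2
        obtain ⟨hy21, hy22⟩ := hy2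
        refine hreg y ?_ ?_ ?_ ?_
        · have := norm_sub_norm_le (circleMap 0 r θ) y.1
          rw [← dist_eq_norm, dist_comm] at this
          linarith [this.trans hy1]
        · have := norm_sub_norm_le y.1 (circleMap 0 r θ)
          rw [← dist_eq_norm] at this
          linarith [this.trans hy1]
        · rw [← dist_eq_norm]
          calc dist y.2.1 z₀ ≤ dist y.2.1 x.1 + dist x.1 z₀ := dist_triangle _ _ _
            _ ≤ η + η := add_le_add hy21 hxz
            _ = 2*η := by ring
        · rw [← dist_eq_norm]
          calc dist y.2.2 w₀ ≤ dist y.2.2 x.2 + dist x.2 w₀ := dist_triangle _ _ _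
            _ ≤ η + η := add_le_add hy22 hxw
            _ = 2*η := by ring
      refine cauchy_fderiv_norm_le hΩopen hΦdiff hη0 hsub ?_
      intro y hy
      rw [mem_closedBall, Prod.dist_eq, max_le_iff] at hy
      obtain ⟨hy1, hy2⟩ := hy
      rw [Prod.dist_eq, max_le_iff] at hy2
      obtain ⟨hy21, hy22⟩ := hy2
      refine hΦbound y ?_ ?_ ?_ ?_
      · have := norm_sub_norm_le (circleMap 0 r θ) y.1
        rw [← dist_eq_norm, dist_comm] at this
        linarith [this.trans hy1]
      · have := norm_sub_norm_le y.1 (circleMap 0 r θ)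
        rw [← dist_eq_norm] at this
        linarith [this.trans hy1]
      · rw [← dist_eq_norm]
        calc dist y.2.1 z₀ ≤ dist y.2.1 x.1 + dist x.1 z₀ := dist_triangle _ _ _
          _ ≤ η + η := add_le_add hy21 hxz
          _ = 2*η := by ring
      · rw [← dist_eq_norm]
        calc dist y.2.2 w₀ ≤ dist y.2.2 x.2 + dist x.2 w₀ := dist_triangle _ _ _
          _ ≤ η + η := add_le_add hy22 hxw
          _ = 2*η := by ring
    -- membership of the path in Ω
    have hpathΩ : ∀ θ : ℝ, ∀ x : ℂ × E, dist x (z₀, w₀) ≤ η → (circleMap 0 r θ, x) ∈ Ω := by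
      intro θ x hx
      obtain ⟨hxz, hxw⟩ : dist x.1 z₀ ≤ η ∧ dist x.2 w₀ ≤ η := by
        rw [Prod.dist_eq, max_le_iff] at hx; exact hx
      have hcm : ‖circleMap 0 r θ‖ = r := by
        simpa [abs_of_pos hr0] using norm_circleMap_zero r θ
      refine hreg _ (by rw [hcm]; linarith) (by rw [hcm]; linarith) ?_ ?_
      · rw [← dist_eq_norm]; linarith
      · rw [← dist_eq_norm]; linarith
    -- the parametric integrand
    set Gf : (ℂ × E) → ℝ → ℂ := fun x θ => (circleMap 0 r θ * I) * Φ (circleMap 0 r θ, x)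
      with hGfdef
    set F' : (ℂ × E) → ℝ → (ℂ × E) →L[ℂ] ℂ := fun x θ =>
      (circleMap 0 r θ * I) • ((fderiv ℂ Φ (circleMap 0 r θ, x)).comp
        (ContinuousLinearMap.inr ℂ ℂ (ℂ × E))) with hF'def
    have hGeq : ∀ x : ℂ × E,
        (∮ ζ in C(0, r), (ζ - x.1)⁻¹ • f (ζ, x.2)) = ∫ θ in (0:ℝ)..2*π, Gf x θ := by
      intro x
      rw [circleIntegral]
      congr 1
      funext θ
      simp only [hGfdef, hΦdef, deriv_circleMap, smul_eq_mul]
    have hpathcont : ∀ x : ℂ × E, Continuous fun θ => (circleMap 0 r θ, x) :=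
      fun x => (continuous_circleMap 0 r).prodMk continuous_const
    have hF_meas : ∀ᶠ x in nhds (z₀, w₀),
        MeasureTheory.AEStronglyMeasurable (Gf x)
          (MeasureTheory.volume.restrict (Set.uIoc (0:ℝ) (2*π))) := by
      filter_upwards [Metric.closedBall_mem_nhds (α := ℂ × E) (z₀, w₀) hη0] with x hx
      have hc : Continuous fun θ => Gf x θ := by
        refine ((continuous_circleMap 0 r).mul continuous_const).mul ?_
        exact hΦdiff.continuousOn.comp_continuous (hpathcont x)
          (fun θ => hpathΩ θ x (mem_closedBall.1 hx))
      exact hc.aestronglyMeasurable.restrict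
    have hF_int : IntervalIntegrable (Gf (z₀, w₀)) MeasureTheory.volume 0 (2*π) := by
      have hc : Continuous fun θ => Gf (z₀, w₀) θ := by
        refine ((continuous_circleMap 0 r).mul continuous_const).mul ?_
        exact hΦdiff.continuousOn.comp_continuous (hpathcont (z₀, w₀))
          (fun θ => hpathΩ θ (z₀, w₀) (by simp [hη0.le]))
      exact hc.intervalIntegrable 0 (2*π)
    have hF'_meas : MeasureTheory.AEStronglyMeasurable (F' (z₀, w₀))
        (MeasureTheory.volume.restrict (Set.uIoc (0:ℝ) (2*π))) := by
      have hc : Continuous (F' (z₀, w₀)) := by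
        refine Continuous.smul ((continuous_circleMap 0 r).mul continuous_const) ?_
        have hfc : ContinuousOn (fderiv ℂ Φ) Ω :=
          fderiv_continuousOn_of_differentiableOn hΩopen hΦdiff
        have hTc : Continuous fun θ => fderiv ℂ Φ (circleMap 0 r θ, (z₀, w₀)) :=
          hfc.comp_continuous (hpathcont (z₀, w₀))
            (fun θ => hpathΩ θ (z₀, w₀) (by simp [hη0.le]))
        exact (((ContinuousLinearMap.compL ℂ (ℂ × E) (ℂ × (ℂ × E)) ℂ).flip
          (ContinuousLinearMap.inr ℂ ℂ (ℂ × E))).continuous).comp hTc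
      have hsc : SecondCountableTopologyEither ℝ ((ℂ × E) →L[ℂ] ℂ) :=
        secondCountableTopologyEither_of_left _ _
      exact hc.aestronglyMeasurable.restrict
    have hinr_norm : ‖ContinuousLinearMap.inr ℂ ℂ (ℂ × E)‖ ≤ 1 := by
      refine ContinuousLinearMap.opNorm_le_bound _ zero_le_one fun x => ?_
      rw [ContinuousLinearMap.inr_apply, one_mul, Prod.norm_def]
      simp [le_refl]
    have h_bound : ∀ᵐ θ ∂MeasureTheory.volume, θ ∈ Set.uIoc (0:ℝ) (2*π) →
        ∀ x ∈ ball ((z₀, w₀) : ℂ × E) η, ‖F' x θ‖ ≤ r * (M/η/η) := by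
      refine MeasureTheory.ae_of_all _ fun θ _ x hx => ?_
      have hxd : dist x (z₀, w₀) ≤ η := (mem_ball.1 hx).le
      have hcm : ‖circleMap 0 r θ * I‖ = r := by
        rw [norm_mul, Complex.norm_I, mul_one]
        simpa [abs_of_pos hr0] using norm_circleMap_zero r θ
      simp only [hF'def]
      calc ‖(circleMap 0 r θ * I) • ((fderiv ℂ Φ (circleMap 0 r θ, x)).comp
            (ContinuousLinearMap.inr ℂ ℂ (ℂ × E)))‖
          = r * ‖(fderiv ℂ Φ (circleMap 0 r θ, x)).comp
            (ContinuousLinearMap.inr ℂ ℂ (ℂ × E))‖ := by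
              rw [norm_smul (circleMap 0 r θ * I) ((fderiv ℂ Φ (circleMap 0 r θ, x)).comp
                (ContinuousLinearMap.inr ℂ ℂ (ℂ × E))), hcm]
        _ ≤ r * (‖fderiv ℂ Φ (circleMap 0 r θ, x)‖ * ‖ContinuousLinearMap.inr ℂ ℂ (ℂ × E)‖) :=
            by gcongr; exact ContinuousLinearMap.opNorm_comp_le _ _
        _ ≤ r * (M/η/η * 1) := by
            refine mul_le_mul_of_nonneg_left ?_ hr0.le
            exact mul_le_mul (hfdb θ x hxd) hinr_norm (norm_nonneg _)
              ((norm_nonneg _).trans (hfdb θ x hxd))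
        _ = r * (M/η/η) := by ring
    have h_diff : ∀ᵐ θ ∂MeasureTheory.volume, θ ∈ Set.uIoc (0:ℝ) (2*π) →
        ∀ x ∈ ball ((z₀, w₀) : ℂ × E) η, HasFDerivAt (fun x => Gf x θ) (F' x θ) x := by
      refine MeasureTheory.ae_of_all _ fun θ _ x hx => ?_
      have hq : (circleMap 0 r θ, x) ∈ Ω := hpathΩ θ x (mem_ball.1 hx).le
      have hΦat : HasFDerivAt Φ (fderiv ℂ Φ (circleMap 0 r θ, x)) (circleMap 0 r θ, x) :=
        (hΦdiff.differentiableAt (hΩopen.mem_nhds hq)).hasFDerivAt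
      have hpath : HasFDerivAt (fun y : ℂ × E => ((circleMap 0 r θ : ℂ), y))
          (ContinuousLinearMap.inr ℂ ℂ (ℂ × E)) x :=
        (hasFDerivAt_const _ _).prodMk (hasFDerivAt_id x)
      exact (hΦat.comp x hpath).const_mul (circleMap 0 r θ * I)
    have key := intervalIntegral.hasFDerivAt_integral_of_dominated_of_fderiv_le
      (𝕜 := ℂ) (μ := MeasureTheory.volume) (F := Gf) (F' := fun x θ => F' x θ)
      (x₀ := ((z₀, w₀) : ℂ × E)) (a := (0:ℝ)) (b := 2*π)
      (bound := fun _ => r * (M/η/η)) (ball_mem_nhds _ hη0) hF_meas hF_int hF'_meas h_bound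
      (intervalIntegrable_const) h_diff
    have hFalt : F = fun x => (2 * π * I : ℂ)⁻¹ • ∫ θ in (0:ℝ)..2*π, Gf x θ := by
      funext x
      simp only [hFdef]
      rw [hGeq x]
    rw [hFalt]
    exact ((key.const_smul ((2 * π * I : ℂ)⁻¹)).differentiableAt)
  -- Part 2 : Cauchy formula on the slice for w ∈ A
  have hFA : ∀ z ∈ ball (0:ℂ) r, ∀ w ∈ A, F (z, w) = f (z, w) := by
    intro z hz w hw
    have hd : DifferentiableOn ℂ (fun ζ => f (ζ, w)) (closedBall (0:ℂ) r) := by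
      intro ζ hζ
      have hζ1 : ζ ∈ ball (0:ℂ) 1 := by
        rw [mem_closedBall, dist_zero_right] at hζ
        rw [mem_ball, dist_zero_right]
        linarith
      have hmem : (ζ, w) ∈ D := Or.inr ⟨hζ1, hw⟩
      exact ((hf.differentiableAt (hDopen.mem_nhds hmem)).comp ζ
        (differentiableAt_id.prodMk (differentiableAt_const w))).differentiableWithinAt
    have hcauchy := hd.circleIntegral_sub_inv_smul hz
    simp only [hFdef]
    rw [hcauchy, smul_smul, inv_mul_cancel₀ two_pi_I_ne_zero, one_smul]
  -- Part 3 : identity theorem in w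
  have hFU : ∀ z ∈ ball (0:ℂ) r \ K, ∀ w ∈ U, F (z, w) = f (z, w) := by
    intro z hz w hw
    have hzb : z ∈ ball (0:ℂ) 1 := ball_subset_ball hr1.le hz.1
    set g : E → ℂ := fun w => F (z, w) - f (z, w) with hgdef
    have hgd : DifferentiableOn ℂ g U := by
      intro w' hw'
      have h1 : DifferentiableAt ℂ (fun w => F (z, w)) w' :=
        (hFdiff (z, w') hz.1 hw').comp w' ((differentiableAt_const z).prodMk differentiableAt_id)
      have h2 : (z, w') ∈ D := Or.inl ⟨⟨hzb, hz.2⟩, hw'⟩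
      have h3 : DifferentiableAt ℂ (fun w => f (z, w)) w' :=
        (hf.differentiableAt (hDopen.mem_nhds h2)).comp w'
          ((differentiableAt_const z).prodMk differentiableAt_id)
      exact (h1.sub h3).differentiableWithinAt
    have h0 : EqOn g 0 A := fun a ha => by
      have := hFA z hz.1 a ha
      simp [hgdef, sub_eq_zero, this]
    have hall := eqOn_zero_of_preconnected_of_eqOn_zero hUopen hUconn.isPreconnected hgd
      hAopen hAne hAU h0
    have := hall hw
    simpa [hgdef, sub_eq_zero] using this
  -- assemble
  refine ⟨fun p => if p.1 ∈ ball (0:ℂ) r then F p else f p, ?_, ?_⟩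
  · rintro ⟨z, w⟩ ⟨hz, hw⟩
    by_cases hzr : z ∈ ball (0:ℂ) r
    · have hd : DifferentiableAt ℂ F (z, w) := hFdiff (z, w) hzr hw
      have hev : (fun p : ℂ × E => if p.1 ∈ ball (0:ℂ) r then F p else f p) =ᶠ[nhds (z, w)] F := by
        filter_upwards [(isOpen_ball.preimage (continuous_fst : Continuous fun p : ℂ × E => p.1)).mem_nhds
          (show (z, w) ∈ (fun p : ℂ × E => p.1) ⁻¹' ball (0:ℂ) r from hzr)] with p hp
        exact if_pos hp
      exact (hd.congr_of_eventuallyEq hev).differentiableWithinAt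
    · have hzK : z ∉ K := fun h => hzr (ball_subset_ball hr'r.le (hKr' h))
      have hmemD : (z, w) ∈ (ball (0:ℂ) 1 \ K) ×ˢ U := ⟨⟨hz, hzK⟩, hw⟩
      have hWopen : IsOpen ((ball (0:ℂ) 1 \ K) ×ˢ U) :=
        (isOpen_ball.sdiff hK.isClosed).prod hUopen
      have hd : DifferentiableAt ℂ f (z, w) :=
        hf.differentiableAt (hDopen.mem_nhds (Or.inl hmemD))
      have hev : (fun p : ℂ × E => if p.1 ∈ ball (0:ℂ) r then F p else f p) =ᶠ[nhds (z, w)] f := by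
        filter_upwards [hWopen.mem_nhds hmemD] with p hp
        by_cases h : p.1 ∈ ball (0:ℂ) r
        · exact (if_pos h).trans (by simpa using hFU p.1 ⟨h, hp.1.2⟩ p.2 hp.2)
        · exact if_neg h
      exact (hd.congr_of_eventuallyEq hev).differentiableWithinAt
  · intro p hp
    by_cases h : p.1 ∈ ball (0:ℂ) r
    · rcases hp with hp | hp
      · exact (if_pos h).trans (by simpa using hFU p.1 ⟨h, hp.1.2⟩ p.2 hp.2)
      · exact (if_pos h).trans (by simpa using hFA p.1 h p.2 hp.2)
    · exact if_neg h
end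

section
/- Let E be a complex Banach space, U ⊆ E an open set, r > 0, and W ⊆ ℂ × E an open set containing (sphere 0 r) ×ˢ U (the product of the circle of radius r centered at 0 in ℂ with U). Suppose f : ℂ × E → ℂ is complex differentiable at every point of W. Define F : ℂ × E → ℂ by F(z, w) := (2πi)⁻¹ · ∮_{ζ ∈ C(0,r)} f(ζ, w) / (ζ − z) dζ, the circle integral over the circle of radius r centered at 0. Then: (a) F is complex differentiable at every point of (ball 0 r) ×ˢ U; and (b) for every w ∈ U such that z ↦ f(z, w) is complex differentiable on an open set containing the closed ball of radius r centered at 0, one has F(z, w) = f(z, w) for all z in ball 0 r. -/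
open Metric Set

set_option maxHeartbeats 1000000
set_option synthInstance.maxHeartbeats 400000

/-- Cauchy estimate: a directional bound on the Fréchet derivative of a bounded
holomorphic function on a ball, in a general complex normed space. -/
lemma aux_fderiv_norm_le {G : Type*} [NormedAddCommGroup G] [NormedSpace ℂ G]
    {f : G → ℂ} {q : G} {δ M : ℝ} (hδ : 0 < δ)
    (hd : ∀ x ∈ ball q δ, DifferentiableAt ℂ f x)
    (hM : ∀ x ∈ ball q δ, ‖f x‖ ≤ M) : ‖fderiv ℂ f q‖ ≤ 2 * M / δ := by
  have hM0 : 0 ≤ M := le_trans (norm_nonneg _) (hM q (mem_ball_self hδ))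
  refine ContinuousLinearMap.opNorm_le_bound _ (by positivity) fun v => ?_
  rcases eq_or_ne v 0 with rfl | hv
  · simp
  have hv' : 0 < ‖v‖ := norm_pos_iff.2 hv
  set g : ℂ → ℂ := fun t => f (q + t • v) with hg_def
  set ρ : ℝ := δ / (2 * ‖v‖) with hρ_def
  have hρ : 0 < ρ := by positivity
  have hmem : ∀ t : ℂ, t ∈ closedBall (0 : ℂ) ρ → q + t • v ∈ ball q δ := by
    intro t ht
    have h1 : ‖t‖ ≤ ρ := by simpa using ht
    have : dist (q + t • v) q = ‖t • v‖ := by simp [dist_eq_norm]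
    rw [mem_ball, this, norm_smul]
    calc ‖t‖ * ‖v‖ ≤ ρ * ‖v‖ := by gcongr
      _ = δ / 2 := by field_simp [hρ_def]; rw [hρ_def]; field_simp
      _ < δ := by linarith
  have hgd : DiffContOnCl ℂ g (ball 0 ρ) := by
    apply DifferentiableOn.diffContOnCl
    intro t ht
    have ht' : t ∈ closedBall (0 : ℂ) ρ := closure_ball_subset_closedBall ht
    have h1 : DifferentiableAt ℂ (fun t : ℂ => q + t • v) t :=
      (differentiableAt_const q).add (differentiableAt_id.smul_const v)
    exact ((hd _ (hmem t ht')).comp t h1).differentiableWithinAt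
  have hDg : HasDerivAt g (fderiv ℂ f q v) 0 := by
    have h1 : HasDerivAt (fun t : ℂ => q + t • v) v 0 := by
      simpa using ((hasDerivAt_id (0 : ℂ)).smul_const v).const_add q
    have h2 : DifferentiableAt ℂ f (q + (0 : ℂ) • v) := by
      simpa using hd q (mem_ball_self hδ)
    have := h2.hasFDerivAt.comp_hasDerivAt 0 h1
    simp at this; exact this
  have key : ‖deriv g 0‖ ≤ M / ρ := by
    refine Complex.norm_deriv_le_of_forall_mem_sphere_norm_le hρ hgd fun t ht => ?_
    exact hM _ (hmem t (sphere_subset_closedBall ht))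
  calc ‖fderiv ℂ f q v‖ = ‖deriv g 0‖ := by rw [hDg.deriv]
    _ ≤ M / ρ := key
    _ = 2 * M / δ * ‖v‖ := by field_simp [hρ_def]; rw [hρ_def]; field_simp

/-- The Fréchet derivative of a holomorphic function on an open subset of a complex
normed space is continuous there. -/
lemma aux_fderiv_continuousOn {G : Type*} [NormedAddCommGroup G] [NormedSpace ℂ G]
    {f : G → ℂ} {W : Set G} (hW : IsOpen W) (hf : DifferentiableOn ℂ f W) :
    ContinuousOn (fderiv ℂ f) W := by
  intro q₀ hq₀
  apply ContinuousAt.continuousWithinAt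
  obtain ⟨δ₀, hδ₀, hball⟩ := Metric.isOpen_iff.1 hW q₀ hq₀
  have hcont : ContinuousAt f q₀ := (hf.differentiableAt (hW.mem_nhds hq₀)).continuousAt
  obtain ⟨δ₁, hδ₁, hbnd⟩ : ∃ δ₁ > 0, ∀ x ∈ ball q₀ δ₁, ‖f x‖ ≤ ‖f q₀‖ + 1 := by
    have h1 : ∀ᶠ x in nhds q₀, ‖f x‖ ≤ ‖f q₀‖ + 1 :=
      hcont.norm.eventually (eventually_le_nhds (by linarith))
    obtain ⟨δ₁, hδ₁, h⟩ := Metric.eventually_nhds_iff_ball.1 h1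
    exact ⟨δ₁, hδ₁, h⟩
  set M : ℝ := ‖f q₀‖ + 1 with hM_def
  set δ : ℝ := min δ₀ δ₁ / 3 with hδ_def
  have hδ : 0 < δ := by positivity
  have h3δ : ∀ x ∈ ball q₀ (3 * δ), x ∈ W ∧ ‖f x‖ ≤ M := by
    intro x hx
    have hx' : dist x q₀ < min δ₀ δ₁ := by
      rw [mem_ball] at hx; rw [hδ_def] at hx; linarith
    exact ⟨hball (mem_ball.2 (hx'.trans_le (min_le_left _ _))),
      hbnd x (mem_ball.2 (hx'.trans_le (min_le_right _ _)))⟩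
  set K : ℝ := 2 * M / δ with hK_def
  have hM0 : 0 ≤ M := by positivity
  have hK0 : 0 ≤ K := by positivity
  -- fderiv bound on the ball of radius 2δ
  have hfb : ∀ x ∈ ball q₀ (2 * δ), ‖fderiv ℂ f x‖ ≤ K := by
    intro x hx
    refine aux_fderiv_norm_le hδ (fun y hy => ?_) (fun y hy => ?_)
    · refine hf.differentiableAt (hW.mem_nhds (h3δ y ?_).1)
      rw [mem_ball] at *
      calc dist y q₀ ≤ dist y x + dist x q₀ := dist_triangle _ _ _
        _ < 3 * δ := by linarith
    · refine (h3δ y ?_).2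
      rw [mem_ball] at *
      calc dist y q₀ ≤ dist y x + dist x q₀ := dist_triangle _ _ _
        _ < 3 * δ := by linarith
  -- f is K-Lipschitz on the ball of radius 2δ
  have hlip : ∀ x ∈ ball q₀ (2 * δ), ∀ y ∈ ball q₀ (2 * δ), ‖f y - f x‖ ≤ K * ‖y - x‖ := by
    intro x hx y hy
    refine (convex_ball q₀ (2 * δ)).norm_image_sub_le_of_norm_fderiv_le
      (fun z hz => hf.differentiableAt (hW.mem_nhds (h3δ z ?_).1)) hfb hx hy
    rw [mem_ball] at *; linarith
  -- main Lipschitz estimate for the derivative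
  have hmain : ∀ q ∈ ball q₀ δ, ‖fderiv ℂ f q - fderiv ℂ f q₀‖ ≤ 2 * (K * ‖q₀ - q‖) / δ := by
    intro q hq
    set u : G := q₀ - q with hu_def
    have hqu : q + u = q₀ := by rw [hu_def]; abel
    have hball1 : ∀ x ∈ ball q δ, x ∈ ball q₀ (2 * δ) := by
      intro x hx
      rw [mem_ball] at *
      calc dist x q₀ ≤ dist x q + dist q q₀ := dist_triangle _ _ _
        _ < 2 * δ := by linarith
    have hball2 : ∀ x ∈ ball q δ, x + u ∈ ball q₀ (2 * δ) := by
      intro x hx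
      rw [mem_ball] at *
      have : dist (x + u) q₀ = dist x q := by
        rw [dist_eq_norm, dist_eq_norm, hu_def]; congr 1; abel
      rw [this]; linarith
    set h : G → ℂ := fun x => f x - f (x + u) with hh_def
    have hhd : ∀ x ∈ ball q δ, DifferentiableAt ℂ h x := by
      intro x hx
      have h1 : DifferentiableAt ℂ f x :=
        hf.differentiableAt (hW.mem_nhds (h3δ x (ball_subset_ball (by linarith) (hball1 x hx))).1)
      have h2 : DifferentiableAt ℂ f (x + u) :=
        hf.differentiableAt (hW.mem_nhds (h3δ _ (ball_subset_ball (by linarith) (hball2 x hx))).1)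
      exact h1.sub (h2.comp x (differentiableAt_id.add_const u))
    have hhM : ∀ x ∈ ball q δ, ‖h x‖ ≤ K * ‖u‖ := by
      intro x hx
      have := hlip (x + u) (hball2 x hx) x (hball1 x hx)
      have heq : ‖q₀ - q‖ = ‖x - (x + u)‖ := by
        rw [hu_def, show x - (x + (q₀ - q)) = -(q₀ - q) by abel, norm_neg]
      rw [hh_def]
      simp only []
      calc ‖f x - f (x + u)‖ ≤ K * ‖x - (x + u)‖ := this
        _ = K * ‖u‖ := by rw [← heq, hu_def]
    have hbound := aux_fderiv_norm_le hδ hhd hhM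
    have hder : fderiv ℂ h q = fderiv ℂ f q - fderiv ℂ f q₀ := by
      have h1 : HasFDerivAt f (fderiv ℂ f q) q :=
        (hf.differentiableAt (hW.mem_nhds (h3δ q (by rw [mem_ball] at *; linarith)).1)).hasFDerivAt
      have h2' : DifferentiableAt ℂ f (q + u) := by
        rw [hqu]; exact hf.differentiableAt (hW.mem_nhds hq₀)
      have h2 : HasFDerivAt (fun x => f (x + u)) (fderiv ℂ f q₀) q := by
        have := h2'.hasFDerivAt.comp q ((hasFDerivAt_id q).add_const u)
        simp [hqu] at this; exact this
      exact (h1.sub h2).fderiv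
    rw [hder] at hbound
    exact hbound
  -- conclude continuity
  refine continuousAt_of_locally_lipschitz hδ (2 * K / δ) fun q hq => ?_
  have hq' : q ∈ ball q₀ δ := by rwa [mem_ball]
  have := hmain q hq'
  rw [dist_eq_norm, dist_eq_norm]
  calc ‖fderiv ℂ f q - fderiv ℂ f q₀‖ ≤ 2 * (K * ‖q₀ - q‖) / δ := this
    _ = 2 * K / δ * ‖q - q₀‖ := by rw [norm_sub_rev]; ring


/-- The Cauchy-integral construction used in the paper's proof of the Hartogs extension
theorem (Remark 1.3f): `F (z, w) = (2πi)⁻¹ ∮_{ζ ∈ C(0,r)} f (ζ, w) / (ζ - z) dζ` is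
holomorphic on `ball 0 r ×ˢ U` and agrees with `f` where `f` is holomorphic in the
first variable on a neighborhood of the closed ball. -/
theorem cauchy_integral_construction {E : Type*} [NormedAddCommGroup E] [NormedSpace ℂ E]
    [CompleteSpace E]
    (U : Set E) (hUopen : IsOpen U) (r : ℝ) (hr : 0 < r)
    (W : Set (ℂ × E)) (hWopen : IsOpen W) (hWsub : sphere (0 : ℂ) r ×ˢ U ⊆ W)
    (f : ℂ × E → ℂ) (hf : DifferentiableOn ℂ f W)
    (F : ℂ × E → ℂ)
    (hF : ∀ p : ℂ × E,
      F p = (2 * Real.pi * Complex.I)⁻¹ * ∮ ζ in C(0, r), f (ζ, p.2) / (ζ - p.1)) :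
    DifferentiableOn ℂ F (ball (0 : ℂ) r ×ˢ U) ∧
      ∀ w ∈ U,
        (∃ V : Set ℂ, IsOpen V ∧ closedBall (0 : ℂ) r ⊆ V ∧
          DifferentiableOn ℂ (fun z => f (z, w)) V) →
        ∀ z ∈ ball (0 : ℂ) r, F (z, w) = f (z, w) := by
  constructor
  · rintro p hp
    rw [mem_prod] at hp
    obtain ⟨hp1, hp2⟩ := hp
    apply DifferentiableAt.differentiableWithinAt
    -- ### Setup of a good neighborhood of `p`
    have hcompact : IsCompact (sphere (0 : ℂ) r ×ˢ ({p.2} : Set E)) :=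
      (isCompact_sphere 0 r).prod isCompact_singleton
    have hsub : sphere (0 : ℂ) r ×ˢ ({p.2} : Set E) ⊆ W := by
      rintro ⟨a, b⟩ ⟨ha, hb⟩
      rw [mem_singleton_iff] at hb
      exact hWsub ⟨ha, hb ▸ hp2⟩
    obtain ⟨δW, hδW, hthick⟩ := hcompact.exists_thickening_subset_open hWopen hsub
    have hp1' : ‖p.1‖ < r := mem_ball_zero_iff.1 hp1
    set ρ : ℝ := (r - ‖p.1‖) / 2 with hρ_def
    have hρ : 0 < ρ := by rw [hρ_def]; linarith
    set ε : ℝ := min (δW / 2) ρ with hε_def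
    have hε : 0 < ε := lt_min (by linarith) hρ
    have hWmem : ∀ ζ ∈ sphere (0 : ℂ) r, ∀ w : E, dist w p.2 ≤ δW / 2 → (ζ, w) ∈ W := by
      intro ζ hζ w hw
      apply hthick
      rw [Metric.mem_thickening_iff]
      refine ⟨(ζ, p.2), ⟨hζ, rfl⟩, ?_⟩
      have hd : dist ((ζ, w) : ℂ × E) (ζ, p.2) = dist w p.2 := by
        rw [Prod.dist_eq]; simp [max_eq_right dist_nonneg]
      rw [hd]; linarith
    -- basic estimates for `x` in the ball around `p`
    have hx2mem : ∀ x : ℂ × E, x ∈ ball p ε → dist x.2 p.2 ≤ δW / 2 := by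
      intro x hx
      have h1 : dist x.2 p.2 ≤ dist x p := by rw [Prod.dist_eq]; exact le_max_right _ _
      have h2 : dist x p < ε := mem_ball.1 hx
      have h3 : ε ≤ δW / 2 := min_le_left _ _
      linarith
    have hρle : ∀ ζ ∈ sphere (0 : ℂ) r, ∀ x : ℂ × E, x ∈ ball p ε → ρ ≤ ‖ζ - x.1‖ := by
      intro ζ hζ x hx
      have hζn : ‖ζ‖ = r := mem_sphere_zero_iff_norm.1 hζ
      have h1 : ‖x.1‖ - ‖p.1‖ ≤ ‖x.1 - p.1‖ := norm_sub_norm_le _ _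
      have h2 : ‖x.1 - p.1‖ ≤ dist x p := by
        rw [← dist_eq_norm, Prod.dist_eq]; exact le_max_left _ _
      have h3 : dist x p < ε := mem_ball.1 hx
      have h4 : ε ≤ ρ := min_le_right _ _
      have h5 : ‖ζ‖ - ‖x.1‖ ≤ ‖ζ - x.1‖ := norm_sub_norm_le _ _
      have hρ' : ρ = (r - ‖p.1‖) / 2 := hρ_def
      rw [hζn] at h5
      linarith
    have hne : ∀ ζ ∈ sphere (0 : ℂ) r, ∀ x : ℂ × E, x ∈ ball p ε → ζ - x.1 ≠ 0 := by
      intro ζ hζ x hx h0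
      have := hρle ζ hζ x hx
      rw [h0, norm_zero] at this
      linarith
    -- ### Bounds on `f` and its derivative near the compact set `sphere 0 r ×ˢ {p.2}`
    set S : Set (ℂ × E) := sphere (0 : ℂ) r ×ˢ ({p.2} : Set E) with hS_def
    obtain ⟨M₀, hM₀⟩ := hcompact.exists_bound_of_continuousOn (hf.continuousOn.mono hsub)
    obtain ⟨B₀, hB₀⟩ :=
      hcompact.exists_bound_of_continuousOn ((aux_fderiv_continuousOn hWopen hf).mono hsub)
    set M : ℝ := M₀ + 1 with hM_def
    set B : ℝ := B₀ + 1 with hB_def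
    have hopenM : IsOpen (W ∩ (fun q => ‖f q‖) ⁻¹' Iio M) :=
      (hf.continuousOn.norm).isOpen_inter_preimage hWopen isOpen_Iio
    have hopenB : IsOpen (W ∩ (fun q => ‖fderiv ℂ f q‖) ⁻¹' Iio B) :=
      ((aux_fderiv_continuousOn hWopen hf).norm).isOpen_inter_preimage hWopen isOpen_Iio
    obtain ⟨δM, hδM, hthickM⟩ := hcompact.exists_thickening_subset_open hopenM
      (fun q hq => ⟨hsub hq, by simpa using (hM₀ q hq).trans_lt (by rw [hM_def]; linarith)⟩)
    obtain ⟨δB, hδB, hthickB⟩ := hcompact.exists_thickening_subset_open hopenB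
      (fun q hq => ⟨hsub hq, by simpa using (hB₀ q hq).trans_lt (by rw [hB_def]; linarith)⟩)
    set ε' : ℝ := min ε (min (δM / 2) (δB / 2)) with hε'_def
    have hε'pos : 0 < ε' := lt_min hε (lt_min (by linarith) (by linarith))
    have hε'le : ε' ≤ ε := min_le_left _ _
    have hballsub : ball p ε' ⊆ ball p ε := ball_subset_ball hε'le
    have hthickmem : ∀ (δ' : ℝ), 0 < δ' → ∀ θ : ℝ, ∀ x : ℂ × E, dist x.2 p.2 < δ' →
        ((circleMap 0 r θ, x.2) : ℂ × E) ∈ thickening δ' S := by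
      intro δ' hδ' θ x hx
      rw [Metric.mem_thickening_iff]
      refine ⟨(circleMap 0 r θ, p.2), ⟨circleMap_mem_sphere 0 hr.le θ, rfl⟩, ?_⟩
      have hd : dist ((circleMap 0 r θ, x.2) : ℂ × E) (circleMap 0 r θ, p.2) = dist x.2 p.2 := by
        rw [Prod.dist_eq]; simp [max_eq_right dist_nonneg]
      rw [hd]; exact hx
    have hdistsmall : ∀ x ∈ ball p ε', dist x.2 p.2 < ε' := by
      intro x hx
      have h1 : dist x.2 p.2 ≤ dist x p := by rw [Prod.dist_eq]; exact le_max_right _ _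
      exact h1.trans_lt (mem_ball.1 hx)
    have hMK : ∀ θ : ℝ, ∀ x ∈ ball p ε', ‖f (circleMap 0 r θ, x.2)‖ ≤ M := by
      intro θ x hx
      have h1 : dist x.2 p.2 < δM := by
        have := hdistsmall x hx
        have h2 : ε' ≤ δM / 2 := le_trans (min_le_right _ _) (min_le_left _ _)
        linarith
      exact le_of_lt (hthickM (hthickmem δM hδM θ x h1)).2
    have hBK : ∀ θ : ℝ, ∀ x ∈ ball p ε', ‖fderiv ℂ f (circleMap 0 r θ, x.2)‖ ≤ B := by
      intro θ x hx
      have h1 : dist x.2 p.2 < δB := by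
        have := hdistsmall x hx
        have h2 : ε' ≤ δB / 2 := le_trans (min_le_right _ _) (min_le_right _ _)
        linarith
      exact le_of_lt (hthickB (hthickmem δB hδB θ x h1)).2
    have hM0 : 0 ≤ M :=
      le_trans (norm_nonneg _) (hMK 0 p (mem_ball_self hε'pos))
    have hB0 : 0 ≤ B :=
      le_trans (norm_nonneg _) (hBK 0 p (mem_ball_self hε'pos))
    -- ### the integrand and its derivative in the parameter
    set Q : (ℂ × E) →L[ℂ] ℂ × E :=
      (0 : (ℂ × E) →L[ℂ] ℂ).prod (ContinuousLinearMap.snd ℂ ℂ E) with hQ_def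
    have hQ : ‖Q‖ ≤ 1 := by
      refine ContinuousLinearMap.opNorm_le_bound _ zero_le_one fun y => ?_
      have h1 : Q y = ((0 : ℂ), y.2) := rfl
      rw [h1, one_mul]
      calc ‖((0 : ℂ), y.2)‖ = ‖y.2‖ := by rw [Prod.norm_def]; simp
        _ ≤ ‖y‖ := norm_snd_le y
    have hfst : ‖ContinuousLinearMap.fst ℂ ℂ E‖ ≤ 1 := by
      refine ContinuousLinearMap.opNorm_le_bound _ zero_le_one fun y => ?_
      rw [one_mul]; exact norm_fst_le y
    set Φ : (ℂ × E) → ℝ → ℂ := fun x θ =>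
      circleMap 0 r θ * Complex.I *
        (f (circleMap 0 r θ, x.2) / (circleMap 0 r θ - x.1)) with hΦ_def
    set D : (ℂ × E) → ℝ → ((ℂ × E) →L[ℂ] ℂ) := fun x θ =>
      (circleMap 0 r θ * Complex.I) •
        (f (circleMap 0 r θ, x.2) •
            ((-((circleMap 0 r θ - x.1) ^ 2)⁻¹) •
              ((0 : (ℂ × E) →L[ℂ] ℂ) - ContinuousLinearMap.fst ℂ ℂ E)) +
          (circleMap 0 r θ - x.1)⁻¹ •
            ((fderiv ℂ f (circleMap 0 r θ, x.2)).comp Q)) with hD_def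
    -- differentiability of the integrand in the parameter
    have hDeriv : ∀ θ : ℝ, ∀ x ∈ ball p ε', HasFDerivAt (fun y => Φ y θ) (D x θ) x := by
      intro θ x hx
      have hζ : circleMap 0 r θ ∈ sphere (0 : ℂ) r := circleMap_mem_sphere 0 hr.le θ
      have hWx : (circleMap 0 r θ, x.2) ∈ W :=
        hWmem _ hζ x.2 ((hdistsmall x hx).le.trans (hε'le.trans (min_le_left _ _)))
      have hne' : circleMap 0 r θ - x.1 ≠ 0 := hne _ hζ x (hballsub hx)
      have hc : HasFDerivAt (fun y : ℂ × E => f (circleMap 0 r θ, y.2))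
          ((fderiv ℂ f (circleMap 0 r θ, x.2)).comp Q) x := by
        have h1 : HasFDerivAt (fun y : ℂ × E => ((circleMap 0 r θ, y.2) : ℂ × E)) Q x :=
          HasFDerivAt.prodMk (hasFDerivAt_const (circleMap 0 r θ) x)
            (ContinuousLinearMap.snd ℂ ℂ E).hasFDerivAt
        exact ((hf.differentiableAt (hWopen.mem_nhds hWx)).hasFDerivAt).comp x h1
      have hd0 : HasFDerivAt (fun y : ℂ × E => circleMap 0 r θ - y.1)
          ((0 : (ℂ × E) →L[ℂ] ℂ) - ContinuousLinearMap.fst ℂ ℂ E) x :=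
        (hasFDerivAt_const (circleMap 0 r θ) x).sub (ContinuousLinearMap.fst ℂ ℂ E).hasFDerivAt
      have hinv : HasDerivAt (fun z : ℂ => z⁻¹) (-((circleMap 0 r θ - x.1) ^ 2)⁻¹)
          (circleMap 0 r θ - x.1) := hasDerivAt_inv hne'
      have hd : HasFDerivAt (fun y : ℂ × E => (circleMap 0 r θ - y.1)⁻¹)
          ((-((circleMap 0 r θ - x.1) ^ 2)⁻¹) •
            ((0 : (ℂ × E) →L[ℂ] ℂ) - ContinuousLinearMap.fst ℂ ℂ E)) x :=
        hinv.comp_hasFDerivAt x hd0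
      have hmul := (hc.mul hd).const_mul (circleMap 0 r θ * Complex.I)
      simpa [hΦ_def, hD_def, div_eq_mul_inv, smul_add] using hmul
    -- bound on the derivative
    set C₀ : ℝ := r * (M * (ρ ^ 2)⁻¹ + ρ⁻¹ * B) with hC₀_def
    have hC₀nonneg : 0 ≤ C₀ := by
      apply mul_nonneg hr.le
      apply add_nonneg (mul_nonneg hM0 (by positivity)) (mul_nonneg (by positivity) hB0)
    have hbound : ∀ θ : ℝ, ∀ x ∈ ball p ε', ‖D x θ‖ ≤ C₀ := by
      intro θ x hx
      have hζ : circleMap 0 r θ ∈ sphere (0 : ℂ) r := circleMap_mem_sphere 0 hr.le θ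
      have hρx : ρ ≤ ‖circleMap 0 r θ - x.1‖ := hρle _ hζ x (hballsub hx)
      have hζI : ‖circleMap 0 r θ * Complex.I‖ = r := by
        rw [norm_mul, Complex.norm_I, mul_one, mem_sphere_zero_iff_norm.1 hζ]
      have hb : ‖(((circleMap 0 r θ - x.1) ^ 2)⁻¹ : ℂ)‖ ≤ (ρ ^ 2)⁻¹ := by
        rw [norm_inv, norm_pow]
        exact inv_anti₀ (by positivity) (by gcongr)
      refine ContinuousLinearMap.opNorm_le_bound _ hC₀nonneg fun y => ?_
      have hQy : ‖Q y‖ ≤ ‖y‖ := by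
        calc ‖Q y‖ ≤ ‖Q‖ * ‖y‖ := Q.le_opNorm y
          _ ≤ 1 * ‖y‖ := mul_le_mul_of_nonneg_right hQ (norm_nonneg y)
          _ = ‖y‖ := one_mul _
      have hDfy : ‖fderiv ℂ f (circleMap 0 r θ, x.2) (Q y)‖ ≤ B * ‖y‖ :=
        ((fderiv ℂ f (circleMap 0 r θ, x.2)).le_opNorm (Q y)).trans
          (mul_le_mul (hBK θ x hx) hQy (norm_nonneg _) hB0)
      have happ : D x θ y = (circleMap 0 r θ * Complex.I) *
          (f (circleMap 0 r θ, x.2) *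
              ((-((circleMap 0 r θ - x.1) ^ 2)⁻¹) * ((0 : ℂ) - y.1)) +
            (circleMap 0 r θ - x.1)⁻¹ * (fderiv ℂ f (circleMap 0 r θ, x.2) (Q y))) := by
        simp only [hD_def, ContinuousLinearMap.coe_smul', Pi.smul_apply,
          ContinuousLinearMap.add_apply, ContinuousLinearMap.smul_apply,
          ContinuousLinearMap.coe_comp', Function.comp_apply,
          ContinuousLinearMap.sub_apply, ContinuousLinearMap.zero_apply,
          ContinuousLinearMap.coe_fst', smul_eq_mul]
      have e1 : ‖f (circleMap 0 r θ, x.2) *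
          ((-((circleMap 0 r θ - x.1) ^ 2)⁻¹) * ((0 : ℂ) - y.1))‖ ≤ M * ((ρ ^ 2)⁻¹ * ‖y‖) := by
        rw [norm_mul, norm_mul, zero_sub, norm_neg, norm_neg]
        refine mul_le_mul (hMK θ x hx) ?_ (by positivity) hM0
        exact mul_le_mul hb (norm_fst_le y) (norm_nonneg _) (by positivity)
      have e2 : ‖(circleMap 0 r θ - x.1)⁻¹ *
          (fderiv ℂ f (circleMap 0 r θ, x.2) (Q y))‖ ≤ ρ⁻¹ * (B * ‖y‖) := by
        rw [norm_mul, norm_inv]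
        exact mul_le_mul (inv_anti₀ hρ hρx) hDfy (norm_nonneg _) (by positivity)
      calc ‖D x θ y‖ = ‖circleMap 0 r θ * Complex.I‖ * ‖f (circleMap 0 r θ, x.2) *
              ((-((circleMap 0 r θ - x.1) ^ 2)⁻¹) * ((0 : ℂ) - y.1)) +
            (circleMap 0 r θ - x.1)⁻¹ * (fderiv ℂ f (circleMap 0 r θ, x.2) (Q y))‖ := by
            rw [happ, norm_mul]
        _ ≤ r * (M * ((ρ ^ 2)⁻¹ * ‖y‖) + ρ⁻¹ * (B * ‖y‖)) := by
            rw [hζI]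
            exact mul_le_mul_of_nonneg_left ((norm_add_le _ _).trans (add_le_add e1 e2)) hr.le
        _ = C₀ * ‖y‖ := by rw [hC₀_def]; ring
    -- continuity in θ
    have hΦcont : ∀ x ∈ ball p ε', Continuous (fun θ => Φ x θ) := by
      intro x hx
      have h1 : Continuous (fun θ : ℝ => ((circleMap 0 r θ, x.2) : ℂ × E)) :=
        (continuous_circleMap 0 r).prodMk continuous_const
      have h2 : Continuous (fun θ : ℝ => f (circleMap 0 r θ, x.2)) :=
        hf.continuousOn.comp_continuous h1 fun θ =>
          hWmem _ (circleMap_mem_sphere 0 hr.le θ) _ ((hdistsmall x hx).le.trans (hε'le.trans (min_le_left _ _)))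
      have h3 : Continuous (fun θ : ℝ => circleMap 0 r θ - x.1) :=
        (continuous_circleMap 0 r).sub continuous_const
      exact ((continuous_circleMap 0 r).mul continuous_const).mul
        (h2.div h3 fun θ => hne _ (circleMap_mem_sphere 0 hr.le θ) x (hballsub hx))
    have hDcont : Continuous (fun θ => D p θ) := by
      have hpp : p ∈ ball p ε' := mem_ball_self hε'pos
      have h1 : Continuous (fun θ : ℝ => ((circleMap 0 r θ, p.2) : ℂ × E)) :=
        (continuous_circleMap 0 r).prodMk continuous_const
      have hmem : ∀ θ : ℝ, ((circleMap 0 r θ, p.2) : ℂ × E) ∈ W := fun θ =>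
        hWmem _ (circleMap_mem_sphere 0 hr.le θ) _ ((hdistsmall p hpp).le.trans (hε'le.trans (min_le_left _ _)))
      have h2 : Continuous (fun θ : ℝ => f (circleMap 0 r θ, p.2)) :=
        hf.continuousOn.comp_continuous h1 hmem
      have h3 : Continuous (fun θ : ℝ => circleMap 0 r θ - p.1) :=
        (continuous_circleMap 0 r).sub continuous_const
      have h3ne : ∀ θ : ℝ, circleMap 0 r θ - p.1 ≠ 0 := fun θ =>
        hne _ (circleMap_mem_sphere 0 hr.le θ) p (hballsub hpp)
      have h4 : Continuous (fun θ : ℝ => fderiv ℂ f (circleMap 0 r θ, p.2)) :=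
        (aux_fderiv_continuousOn hWopen hf).comp_continuous h1 hmem
      have h5 : Continuous (fun θ : ℝ => (fderiv ℂ f (circleMap 0 r θ, p.2)).comp Q) :=
        h4.clm_comp continuous_const
      have h6 : Continuous (fun θ : ℝ => -((circleMap 0 r θ - p.1) ^ 2)⁻¹) :=
        ((h3.pow 2).inv₀ fun θ => pow_ne_zero 2 (h3ne θ)).neg
      have h7 : Continuous (fun θ : ℝ => (circleMap 0 r θ - p.1)⁻¹) :=
        h3.inv₀ h3ne
      exact (((continuous_circleMap 0 r).mul continuous_const).smul
        ((h2.smul (h6.smul continuous_const)).add (h7.smul h5)))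
    -- ### differentiation under the integral sign
    have hint := intervalIntegral.hasFDerivAt_integral_of_dominated_of_fderiv_le
      (F := Φ) (F' := D) (x₀ := p) (a := (0 : ℝ)) (b := 2 * Real.pi)
      (bound := fun _ => C₀) (μ := MeasureTheory.volume) (Metric.ball_mem_nhds p hε'pos)
      (Filter.eventually_of_mem (Metric.ball_mem_nhds p hε'pos) fun x hx =>
        (hΦcont x hx).aestronglyMeasurable)
      ((hΦcont p (mem_ball_self hε'pos)).intervalIntegrable _ _)
      hDcont.aestronglyMeasurable
      (Filter.Eventually.of_forall fun θ _ x hx => hbound θ x hx)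
      intervalIntegrable_const
      (Filter.Eventually.of_forall fun θ _ x hx => hDeriv θ x hx)
    have hFeq : F = fun x => (2 * Real.pi * Complex.I)⁻¹ *
        ∫ θ in (0 : ℝ)..(2 * Real.pi), Φ x θ := by
      funext x
      rw [hF x]
      congr 1
      simp only [circleIntegral, deriv_circleMap, smul_eq_mul, hΦ_def]
    rw [hFeq]
    exact hint.differentiableAt.const_mul _
  · rintro w hw ⟨V, hVopen, hVsub, hVdiff⟩ z hz
    have hgd : DiffContOnCl ℂ (fun ζ => f (ζ, w)) (ball (0 : ℂ) r) :=
      (hVdiff.mono (closure_ball_subset_closedBall.trans hVsub)).diffContOnCl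
    have hcauchy := hgd.circleIntegral_sub_inv_smul hz
    have hintegral : (∮ ζ in C(0, r), f (ζ, w) / (ζ - z)) =
        (2 * Real.pi * Complex.I) * f (z, w) := by
      have heq : (fun ζ => f (ζ, w) / (ζ - z)) = fun ζ => (ζ - z)⁻¹ • f (ζ, w) := by
        funext ζ; rw [smul_eq_mul, div_eq_inv_mul]
      calc (∮ ζ in C(0, r), f (ζ, w) / (ζ - z)) =
          (∮ ζ in C(0, r), (ζ - z)⁻¹ • f (ζ, w)) := by rw [heq]
        _ = (2 * Real.pi * Complex.I) • f (z, w) := hcauchy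
        _ = (2 * Real.pi * Complex.I) * f (z, w) := smul_eq_mul _ _
    have := hF (z, w)
    simp only at this
    rw [this, hintegral, inv_mul_cancel_left₀ Complex.two_pi_I_ne_zero]
end

section
/- Let R be a commutative ring, I an ideal of R, and Q an injective R-module (Module.Injective R Q). Let N := {x ∈ Q | a • x = 0 for all a ∈ I} be the submodule of Q annihilated by I, endowed with its natural R⧸I-module structure (which exists since N is torsion by I). Then N is an injective R⧸I-module. -/
/-- Key step of Lemma 1.2a: if `Q` is an injective `R`-module and `I` is an ideal of `R`,
then the submodule `N = {x ∈ Q | ∀ a ∈ I, a • x = 0}` of elements annihilated by `I`,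
with its natural `R ⧸ I`-module structure, is an injective `R ⧸ I`-module. -/
theorem injective_torsionBySet_of_injective {R : Type*} [CommRing R] (I : Ideal R)
    (Q : Type*) [AddCommGroup Q] [Module R Q] (hQ : Module.Injective R Q) :
    Module.Injective (R ⧸ I) (Submodule.torsionBySet R Q I) := by
  constructor
  intro X Y _ _ _ _ f hf g
  -- Regard `X` and `Y` as `R`-modules via the quotient map.
  letI : Module R X := Module.compHom X (Ideal.Quotient.mk I)
  letI : Module R Y := Module.compHom Y (Ideal.Quotient.mk I)
  -- `f` as an `R`-linear map.
  let fR : X →ₗ[R] Y :=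
    { toFun := f
      map_add' := f.map_add
      map_smul' := fun r x => f.map_smul (Ideal.Quotient.mk I r) x }
  -- The composition of `g` with the inclusion, as an `R`-linear map to `Q`.
  let gR : X →ₗ[R] Q :=
    { toFun := fun x => (g x : Q)
      map_add' := fun x y => by simp
      map_smul' := fun r x => by
        show ((g ((Ideal.Quotient.mk I r) • x) : Q)) = r • (g x : Q)
        rw [g.map_smul]
        rfl }
  obtain ⟨h, hh⟩ := hQ.out fR hf gR
  -- `h` lands in the torsion submodule.
  have hmem : ∀ y : Y, h y ∈ Submodule.torsionBySet R Q I := by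
    intro y
    rw [Submodule.mem_torsionBySet_iff]
    rintro ⟨a, ha⟩
    have h0 : (a : R) • y = 0 := by
      show (Ideal.Quotient.mk I a) • y = 0
      rw [Ideal.Quotient.eq_zero_iff_mem.mpr ha, zero_smul]
    calc (a : R) • h y = h ((a : R) • y) := (h.map_smul a y).symm
      _ = 0 := by rw [h0, map_zero]
  refine ⟨{ toFun := fun y => ⟨h y, hmem y⟩
            map_add' := fun y z => by ext; simp
            map_smul' := fun c y => ?_ }, fun x => ?_⟩
  · obtain ⟨r, rfl⟩ := Ideal.Quotient.mk_surjective c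
    ext
    show h (r • y) = r • h y
    exact h.map_smul r y
  · ext
    exact hh x
end

section
/- Let R be a commutative ring, M an R-module, and f, g : M →ₗ[R] M linear endomorphisms satisfying the commutation relation g ∘ f = f ∘ g + id. Then for every integer k ≥ 1 and every m ∈ M with f^k m = 0, one has f^(k−1) (f (g m) + k • m) = 0; that is, the operator f ∘ g + k • id maps the kernel of f^k into the kernel of f^(k−1). -/
/-- Claim (A.7.4) in the paper's proof of Kashiwara's equivalence: if `g ∘ f = f ∘ g + id`
(the Heisenberg relation) and `f ^ k m = 0` with `k ≥ 1`, then
`f ^ (k - 1) (f (g m) + k • m) = 0`, i.e. `f ∘ g + k • id` maps `ker (f ^ k)` into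
`ker (f ^ (k - 1))`. -/
theorem heisenberg_ker_pow {R M : Type*} [CommRing R] [AddCommGroup M] [Module R M]
    (f g : M →ₗ[R] M) (h : g ∘ₗ f = f ∘ₗ g + LinearMap.id)
    (k : ℕ) (hk : 1 ≤ k) (m : M) (hm : (f ^ k) m = 0) :
    (f ^ (k - 1)) (f (g m) + k • m) = 0 := by
  have key : ∀ n : ℕ, g ∘ₗ (f ^ (n + 1)) = ((f ^ (n + 1)) ∘ₗ g) + (n + 1 : ℕ) • f ^ n := by
    intro n
    induction n with
    | zero => simpa [Module.End.one_eq_id] using h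
    | succ n ih =>
      have e1 : (f ^ n) ∘ₗ f = f ^ (n + 1) := (pow_succ f n).symm
      have e2 : (f ^ (n + 1)) ∘ₗ f = f ^ (n + 2) := (pow_succ f (n + 1)).symm
      calc g ∘ₗ (f ^ (n + 2))
          = (g ∘ₗ (f ^ (n + 1))) ∘ₗ f := by rw [LinearMap.comp_assoc, e2]
        _ = ((f ^ (n + 1)) ∘ₗ g) ∘ₗ f + (n + 1) • ((f ^ n) ∘ₗ f) := by
            rw [ih, LinearMap.add_comp, LinearMap.smul_comp]
        _ = (f ^ (n + 1)) ∘ₗ (g ∘ₗ f) + (n + 1) • f ^ (n + 1) := by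
            rw [LinearMap.comp_assoc, e1]
        _ = (f ^ (n + 1)) ∘ₗ (f ∘ₗ g) + (f ^ (n + 1)) ∘ₗ LinearMap.id
              + (n + 1) • f ^ (n + 1) := by rw [h, LinearMap.comp_add]
        _ = (f ^ (n + 2)) ∘ₗ g + (n + 1 + 1) • f ^ (n + 1) := by
            rw [← LinearMap.comp_assoc, e2, LinearMap.comp_id]
            rw [show (n + 1 + 1) • f ^ (n + 1) = (n + 1) • f ^ (n + 1) + f ^ (n + 1) from
              by rw [succ_nsmul]]
            abel
  obtain ⟨n, rfl⟩ : ∃ n, k = n + 1 := ⟨k - 1, (Nat.succ_pred_eq_of_pos hk).symm⟩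
  simp only [Nat.add_sub_cancel]
  have hk' := congrArg (fun φ => φ m) (key n)
  simp only [LinearMap.comp_apply, LinearMap.add_apply, LinearMap.smul_apply, hm,
    map_zero] at hk'
  have : (f ^ (n + 1)) (g m) + (n + 1) • (f ^ n) m = 0 := by
    rw [← hk']
  calc (f ^ n) (f (g m) + (n + 1 : ℕ) • m)
      = (f ^ (n + 1)) (g m) + (n + 1) • (f ^ n) m := by
        rw [map_add, map_nsmul, pow_succ, Module.End.mul_apply]
    _ = 0 := this
end

section
/- Let K be a field of characteristic zero, M a K-vector space, and f, g : M →ₗ[K] M linear endomorphisms satisfying the commutation relation g ∘ f = f ∘ g + id. Assume that every element of M is annihilated by some power of f, i.e. for every m ∈ M there exists k ∈ ℕ with f^k m = 0. Then the family of subspaces M_k := ker(f ∘ g + k • id), indexed by integers k ≥ 1, is independent and its supremum is all of M; in other words, M is the internal direct sum ⊕_{k ≥ 1} ker(f ∘ g + k • id). -/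
open Polynomial

section KashiwaraAux

variable {K M : Type*} [Field K] [CharZero K] [AddCommGroup M] [Module K M]

/-- The linear factor `X - C (-(k+1))`. -/
noncomputable def kashiwaraL (K : Type*) [Field K] (k : ℕ) : K[X] := X - C (-((k : K) + 1))

/-- `A θ k = θ + (k+1) • 1`. -/
noncomputable def kashiwaraA (θ : Module.End K M) (k : ℕ) : Module.End K M :=
  aeval θ (kashiwaraL K k)

lemma kashiwaraA_eq (θ : Module.End K M) (k : ℕ) :
    kashiwaraA θ k = θ + ((k : K) + 1) • 1 := by
  rw [kashiwaraA, kashiwaraL, map_sub, aeval_X, aeval_C,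
    Algebra.algebraMap_eq_smul_one, neg_smul, sub_neg_eq_add]

/-- `B θ c n = ∏_{k<n} A θ (k+c)`. -/
noncomputable def kashiwaraB (θ : Module.End K M) (c n : ℕ) : Module.End K M :=
  aeval θ (∏ k ∈ Finset.range n, kashiwaraL K (k + c))

lemma kashiwaraB_succ (θ : Module.End K M) (c n : ℕ) :
    kashiwaraB θ c (n + 1) = kashiwaraB θ c n * kashiwaraA θ (n + c) := by
  rw [kashiwaraB, Finset.prod_range_succ, map_mul, kashiwaraB, kashiwaraA]

lemma kashiwaraB_succ' (θ : Module.End K M) (c n : ℕ) :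
    kashiwaraB θ c (n + 1) = kashiwaraB θ (c + 1) n * kashiwaraA θ c := by
  rw [kashiwaraB, Finset.prod_range_succ', map_mul, kashiwaraB, kashiwaraA]
  congr 2
  · exact Finset.prod_congr rfl fun k _ => by rw [show k + 1 + c = k + (c + 1) from by omega]
  · rw [zero_add]

variable {f g : M →ₗ[K] M}

lemma kashiwara_theta_f (h : g ∘ₗ f = f ∘ₗ g + LinearMap.id) :
    (f * g) * f = f * (f * g) + f := by
  have h' : g * f = f * g + 1 := h
  calc (f * g) * f = f * (g * f) := by rw [mul_assoc]
    _ = f * (f * g) + f := by rw [h', mul_add, mul_one]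

lemma kashiwaraA_shift (h : g ∘ₗ f = f ∘ₗ g + LinearMap.id) (k : ℕ) :
    kashiwaraA (f * g) k * f = f * kashiwaraA (f * g) (k + 1) := by
  have hθf := kashiwara_theta_f h
  rw [kashiwaraA_eq, kashiwaraA_eq]
  push_cast
  simp only [add_mul, mul_add, smul_mul_assoc, mul_smul_comm, one_mul, mul_one, hθf]
  module

lemma kashiwaraB_shift (h : g ∘ₗ f = f ∘ₗ g + LinearMap.id) (c n : ℕ) :
    kashiwaraB (f * g) c n * f = f * kashiwaraB (f * g) (c + 1) n := by
  induction n with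
  | zero => simp [kashiwaraB]
  | succ n ih =>
    rw [kashiwaraB_succ, mul_assoc, kashiwaraA_shift h, ← mul_assoc, ih, mul_assoc,
      show n + c + 1 = n + (c + 1) by omega, ← kashiwaraB_succ]

lemma kashiwara_kill (h : g ∘ₗ f = f ∘ₗ g + LinearMap.id) :
    ∀ n (m : M), (f ^ n) m = 0 → kashiwaraB (f * g) 0 n m = 0 := by
  intro n
  induction n with
  | zero =>
    intro m hm
    simp only [pow_zero, Module.End.one_apply] at hm
    simpa [kashiwaraB] using hm
  | succ n ih =>
    intro m hm
    have hfm : (f ^ n) (f m) = 0 := by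
      rw [← Module.End.mul_apply, ← pow_succ]; exact hm
    have h1 : (kashiwaraB (f * g) 0 n * f) m = 0 := ih (f m) hfm
    rw [kashiwaraB_shift h, zero_add] at h1
    have h2 : (g ∘ₗ f) (kashiwaraB (f * g) 1 n m) = 0 := by
      simp only [LinearMap.comp_apply]
      rw [show f (kashiwaraB (f * g) 1 n m) = 0 from h1]
      exact map_zero g
    rw [h] at h2
    have h3 : ((f * g + 1) * kashiwaraB (f * g) 1 n) m = 0 := by
      simpa [Module.End.mul_apply] using h2
    have hA0 : kashiwaraA (f * g) 0 = f * g + 1 := by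
      rw [kashiwaraA_eq]; norm_num
    have hcomm : kashiwaraA (f * g) 0 * kashiwaraB (f * g) 1 n
        = kashiwaraB (f * g) 0 (n + 1) := by
      rw [kashiwaraB_succ' (f * g) 0 n, zero_add]
      rw [kashiwaraA, kashiwaraB, ← map_mul, mul_comm, map_mul]
    rw [← hcomm, hA0]
    exact h3



lemma kashiwara_ker_le (θ : Module.End K M) (n : ℕ) :
    LinearMap.ker (kashiwaraB θ 0 n) ≤
      ⨆ k : ℕ+, LinearMap.ker (θ + (k : ℕ) • LinearMap.id) := by
  induction n with
  | zero =>
    simp only [kashiwaraB, Finset.range_zero, Finset.prod_empty, map_one,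
      Module.End.one_eq_id, LinearMap.ker_id]
    exact bot_le
  | succ n ih =>
    have hs : Function.Injective (fun k : ℕ => -((k : K) + 1)) := by
      intro a b hab
      simp only [neg_inj, add_left_inj, Nat.cast_inj] at hab
      exact hab
    have hcop : IsCoprime (∏ k ∈ Finset.range n, kashiwaraL K (k + 0)) (kashiwaraL K (n + 0)) := by
      apply IsCoprime.prod_left
      intro i hi
      have hne : i ≠ n := Nat.ne_of_lt (Finset.mem_range.mp hi)
      simpa only [Nat.add_zero, Function.onFun, kashiwaraL] using pairwise_coprime_X_sub_C hs hne
    have hsplit : kashiwaraB θ 0 (n + 1) = aeval θ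
        ((∏ k ∈ Finset.range n, kashiwaraL K (k + 0)) * kashiwaraL K (n + 0)) := by
      rw [kashiwaraB, Finset.prod_range_succ]
    rw [hsplit, ← Polynomial.sup_ker_aeval_eq_ker_aeval_mul_of_coprime θ hcop]
    apply sup_le
    · exact ih
    · have hop : aeval θ (kashiwaraL K (n + 0)) = θ + (n + 1 : ℕ) • LinearMap.id := by
        rw [Nat.add_zero, ← kashiwaraA, kashiwaraA_eq,
          ← Nat.cast_smul_eq_nsmul K (n + 1) (LinearMap.id : M →ₗ[K] M)]
        push_cast
        rfl
      rw [hop]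
      exact le_iSup (fun k : ℕ+ => LinearMap.ker (θ + (k : ℕ) • LinearMap.id)) ⟨n + 1, n.succ_pos⟩

end KashiwaraAux


/-- Decomposition (A.7.6) in the paper's proof of Kashiwara's equivalence: if
`g ∘ f = f ∘ g + id` and every element of `M` is annihilated by some power of `f`, then
`M` is the internal direct sum of the kernels `ker (f ∘ g + k • id)` for `k ≥ 1`. -/
theorem kashiwara_direct_sum {K M : Type*} [Field K] [CharZero K] [AddCommGroup M]
    [Module K M] (f g : M →ₗ[K] M) (h : g ∘ₗ f = f ∘ₗ g + LinearMap.id)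
    (hnil : ∀ m : M, ∃ k : ℕ, (f ^ k) m = 0) :
    iSupIndep (fun k : ℕ+ => LinearMap.ker (f ∘ₗ g + (k : ℕ) • LinearMap.id)) ∧
      (⨆ k : ℕ+, LinearMap.ker (f ∘ₗ g + (k : ℕ) • LinearMap.id)) = ⊤ := by
  constructor
  · have h1 : (fun k : ℕ+ => LinearMap.ker (f ∘ₗ g + (k : ℕ) • LinearMap.id))
        = fun k : ℕ+ => Module.End.eigenspace (f ∘ₗ g) (-((k : ℕ) : K)) := by
      funext k
      ext m
      rw [LinearMap.mem_ker, Module.End.mem_eigenspace_iff]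
      simp only [LinearMap.add_apply, LinearMap.smul_apply, LinearMap.id_apply,
        ← Nat.cast_smul_eq_nsmul K, add_eq_zero_iff_eq_neg, neg_smul]
    rw [h1]
    have hinj : Function.Injective (fun k : ℕ+ => -((k : ℕ) : K)) := by
      intro a b hab
      simp only [neg_inj, Nat.cast_inj] at hab
      exact PNat.coe_injective hab
    exact (Module.End.eigenspaces_iSupIndep (f ∘ₗ g : Module.End K M)).comp hinj
  · rw [eq_top_iff]
    intro m _
    obtain ⟨n, hn⟩ := hnil m
    have hm : m ∈ LinearMap.ker (kashiwaraB (f * g) 0 n) :=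
      LinearMap.mem_ker.mpr (kashiwara_kill h n m hn)
    have := kashiwara_ker_le (f * g) n hm
    simpa only [Module.End.mul_eq_comp] using this
end

section
/- Let K be a field, M a K-vector space, and f, g : M →ₗ[K] M linear endomorphisms satisfying the commutation relation g ∘ f = f ∘ g + id; set θ := f ∘ g. For ν ∈ K let E(ν) denote the generalized eigenspace {m ∈ M | (θ − ν·id)^N m = 0 for some N ∈ ℕ}. Then: (a) f maps E(ν) into E(ν + 1) and g maps E(ν + 1) into E(ν), for every ν ∈ K; and (b) if ν ≠ −1, then f restricts to a bijection from E(ν) onto E(ν + 1), and g restricts to a bijection from E(ν + 1) onto E(ν). -/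
open Module

private lemma heis_inj {K M : Type*} [Field K] [AddCommGroup M] [Module K M]
    (A : Module.End K M) (c : K) (hc : c ≠ 0) :
    ∀ (N : ℕ) (m : M), ((A - c • 1) ^ N) m = 0 → A m = 0 → m = 0 := by
  intro N
  induction N with
  | zero => intro m hm _; simpa using hm
  | succ N ih =>
    intro m hm hAm
    have h1 : (A - c • 1) m = -(c • m) := by
      simp [LinearMap.sub_apply, hAm]
    have h2 : ((A - c • 1) ^ N) ((A - c • 1) m) = 0 := by
      rw [← Module.End.mul_apply, ← pow_succ]; exact hm
    have h3 : A ((A - c • 1) m) = 0 := by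
      rw [h1]; simp [hAm]
    have := ih _ h2 h3
    rw [h1, neg_eq_zero] at this
    exact (smul_eq_zero.mp this).resolve_left hc

private lemma heis_surj {K M : Type*} [Field K] [AddCommGroup M] [Module K M]
    (A : Module.End K M) (c : K) (hc : c ≠ 0) (p : Submodule K M)
    (hp : ∀ x ∈ p, A x ∈ p) :
    ∀ (N : ℕ) (m : M), m ∈ p → ((A - c • 1) ^ N) m = 0 → ∃ n ∈ p, A n = m := by
  intro N
  induction N with
  | zero => intro m _ hm; refine ⟨0, p.zero_mem, ?_⟩; simp_all
  | succ N ih =>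
    intro m hmp hm
    have humem : (A - c • 1) m ∈ p := by
      simpa [LinearMap.sub_apply] using p.sub_mem (hp m hmp) (p.smul_mem c hmp)
    have h2 : ((A - c • 1) ^ N) ((A - c • 1) m) = 0 := by
      rw [← Module.End.mul_apply, ← pow_succ]; exact hm
    obtain ⟨n', hn'p, hn'⟩ := ih _ humem h2
    refine ⟨c⁻¹ • (m - n'), p.smul_mem _ (p.sub_mem hmp hn'p), ?_⟩
    have : A m = (A - c • 1) m + c • m := by simp [LinearMap.sub_apply]
    rw [map_smul, map_sub, hn', this, add_sub_cancel_left, smul_smul,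
      inv_mul_cancel₀ hc, one_smul]

/-- Claim (1.3.1) of Remark 1.3a: for endomorphisms with `g ∘ f = f ∘ g + id` and
`θ := f ∘ g`, the map `f` sends the generalized `ν`-eigenspace of `θ` into the
generalized `(ν+1)`-eigenspace and `g` goes the other way; if `ν ≠ -1` these maps are
bijections between the two generalized eigenspaces. -/
theorem heisenberg_gen_eigenspace_shift {K M : Type*} [Field K] [AddCommGroup M]
    [Module K M] (f g : M →ₗ[K] M) (h : g ∘ₗ f = f ∘ₗ g + LinearMap.id) :
    (∀ ν : K,
      (∀ m ∈ Module.End.maxGenEigenspace (f ∘ₗ g) ν,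
        f m ∈ Module.End.maxGenEigenspace (f ∘ₗ g) (ν + 1)) ∧
      (∀ m ∈ Module.End.maxGenEigenspace (f ∘ₗ g) (ν + 1),
        g m ∈ Module.End.maxGenEigenspace (f ∘ₗ g) ν)) ∧
    (∀ ν : K, ν ≠ -1 →
      Set.BijOn f (Module.End.maxGenEigenspace (f ∘ₗ g) ν : Set M)
        (Module.End.maxGenEigenspace (f ∘ₗ g) (ν + 1) : Set M) ∧
      Set.BijOn g (Module.End.maxGenEigenspace (f ∘ₗ g) (ν + 1) : Set M)
        (Module.End.maxGenEigenspace (f ∘ₗ g) ν : Set M)) := by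
  set θ : Module.End K M := f ∘ₗ g with hθ
  have hmul : (g * f : Module.End K M) = θ + 1 := h
  have hθmul : θ = f * g := rfl
  have comm1 : θ * f = f * (θ + 1) := by rw [hθmul, mul_assoc, hmul, hθmul]
  have comm2 : g * θ = (θ + 1) * g := by rw [hθmul, ← mul_assoc, hmul, hθmul]
  -- shifted commutation with powers
  have commf : ∀ (ν : K) (k : ℕ),
      ((θ - (ν + 1) • 1) ^ k) * f = f * ((θ - ν • 1) ^ k) := by
    intro ν k
    have base : (θ - (ν + 1) • 1) * f = f * (θ - ν • 1) := by
      have h1 : ((ν + 1) • (1 : Module.End K M)) * f = (ν + 1) • f := by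
        rw [smul_mul_assoc, one_mul]
      have h2 : f * (ν • (1 : Module.End K M)) = ν • f := by
        rw [mul_smul_comm, mul_one]
      rw [sub_mul, mul_sub, comm1, h1, h2, mul_add, mul_one, add_smul, one_smul]
      abel
    induction k with
    | zero => simp
    | succ k ih =>
      rw [pow_succ, pow_succ, mul_assoc, base, ← mul_assoc, ih, mul_assoc]
  have commg : ∀ (ν : K) (k : ℕ),
      g * ((θ - (ν + 1) • 1) ^ k) = ((θ - ν • 1) ^ k) * g := by
    intro ν k
    have base : g * (θ - (ν + 1) • 1) = (θ - ν • 1) * g := by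
      have h1 : g * ((ν + 1) • (1 : Module.End K M)) = (ν + 1) • g := by
        rw [mul_smul_comm, mul_one]
      have h2 : (ν • (1 : Module.End K M)) * g = ν • g := by
        rw [smul_mul_assoc, one_mul]
      rw [mul_sub, sub_mul, comm2, h1, h2, add_mul, one_mul, add_smul, one_smul]
      abel
    induction k with
    | zero => simp
    | succ k ih =>
      rw [pow_succ', pow_succ', ← mul_assoc, base, mul_assoc, ih, ← mul_assoc]
  have partA : ∀ ν : K,
      (∀ m ∈ Module.End.maxGenEigenspace θ ν,
        f m ∈ Module.End.maxGenEigenspace θ (ν + 1)) ∧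
      (∀ m ∈ Module.End.maxGenEigenspace θ (ν + 1),
        g m ∈ Module.End.maxGenEigenspace θ ν) := by
    intro ν
    constructor
    · intro m hm
      rw [Module.End.mem_maxGenEigenspace] at hm ⊢
      obtain ⟨k, hk⟩ := hm
      refine ⟨k, ?_⟩
      have := congrArg (fun φ : Module.End K M => φ m) (commf ν k)
      simp only [Module.End.mul_apply] at this
      rw [this, hk, map_zero]
    · intro m hm
      rw [Module.End.mem_maxGenEigenspace] at hm ⊢
      obtain ⟨k, hk⟩ := hm
      refine ⟨k, ?_⟩
      have := congrArg (fun φ : Module.End K M => φ m) (commg ν k)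
      simp only [Module.End.mul_apply] at this
      rw [← this, hk, map_zero]
  refine ⟨partA, ?_⟩
  intro ν hν
  have hc : ν + 1 ≠ 0 := fun hc => hν (by linear_combination hc)
  set E : K → Submodule K M := Module.End.maxGenEigenspace θ with hE
  have hInv : ∀ μ : K, ∀ x ∈ E μ, θ x ∈ E μ := by
    intro μ x hx
    rw [hE, Module.End.mem_maxGenEigenspace] at hx ⊢
    obtain ⟨k, hk⟩ := hx
    refine ⟨k, ?_⟩
    have cm : Commute θ (θ - μ • 1) :=
      (Commute.refl θ).sub_right ((Commute.one_right θ).smul_right μ)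
    have : ((θ - μ • 1) ^ k) * θ = θ * ((θ - μ • 1) ^ k) := (cm.pow_right k).eq.symm
    have := congrArg (fun φ : Module.End K M => φ x) this
    simp only [Module.End.mul_apply] at this
    rw [this, hk, map_zero]
  -- key identity: (θ+1) - (ν+1)•1 = θ - ν•1
  have keyid : θ + 1 - (ν + 1) • (1 : Module.End K M) = θ - ν • 1 := by
    rw [add_smul, one_smul]; abel
  constructor
  · refine ⟨fun m hm => (partA ν).1 m hm, ?_, ?_⟩
    · -- InjOn f
      intro m₁ h₁ m₂ h₂ heq
      have hd : m₁ - m₂ ∈ E ν := (E ν).sub_mem h₁ h₂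
      have hfd : f (m₁ - m₂) = 0 := by rw [map_sub, heq, sub_self]
      rw [hE, Module.End.mem_maxGenEigenspace] at hd
      obtain ⟨k, hk⟩ := hd
      have hk' : (((θ + 1) - (ν + 1) • 1) ^ k) (m₁ - m₂) = 0 := by rw [keyid]; exact hk
      have hA : (θ + 1) (m₁ - m₂) = 0 := by
        have : (θ + 1) (m₁ - m₂) = g (f (m₁ - m₂)) := by
          rw [← hmul]; rfl
        rw [this, hfd, map_zero]
      have := heis_inj (θ + 1) (ν + 1) hc k _ hk' hA
      exact sub_eq_zero.mp this
    · -- SurjOn f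
      intro m hm
      rw [hE] at hm
      rw [SetLike.mem_coe, Module.End.mem_maxGenEigenspace] at hm
      obtain ⟨k, hk⟩ := hm
      have hmE : m ∈ E (ν + 1) := by
        rw [hE, Module.End.mem_maxGenEigenspace]; exact ⟨k, hk⟩
      obtain ⟨n, hnE, hn⟩ := heis_surj θ (ν + 1) hc (E (ν + 1)) (hInv (ν + 1)) k m hmE hk
      refine ⟨g n, (partA ν).2 n hnE, ?_⟩
      show f (g n) = m
      exact hn
  · refine ⟨fun m hm => (partA ν).2 m hm, ?_, ?_⟩
    · -- InjOn g
      intro m₁ h₁ m₂ h₂ heq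
      have hd : m₁ - m₂ ∈ E (ν + 1) := (E (ν + 1)).sub_mem h₁ h₂
      have hgd : g (m₁ - m₂) = 0 := by rw [map_sub, heq, sub_self]
      rw [hE, Module.End.mem_maxGenEigenspace] at hd
      obtain ⟨k, hk⟩ := hd
      have hA : θ (m₁ - m₂) = 0 := by
        show f (g (m₁ - m₂)) = 0
        rw [hgd, map_zero]
      have := heis_inj θ (ν + 1) hc k _ hk hA
      exact sub_eq_zero.mp this
    · -- SurjOn g
      intro m hm
      rw [hE] at hm
      rw [SetLike.mem_coe, Module.End.mem_maxGenEigenspace] at hm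
      obtain ⟨k, hk⟩ := hm
      have hmE : m ∈ E ν := by
        rw [hE, Module.End.mem_maxGenEigenspace]; exact ⟨k, hk⟩
      have hk' : (((θ + 1) - (ν + 1) • 1) ^ k) m = 0 := by rw [keyid]; exact hk
      have hInv' : ∀ x ∈ E ν, (θ + 1) x ∈ E ν := by
        intro x hx
        have : (θ + 1) x = θ x + x := rfl
        rw [this]; exact (E ν).add_mem (hInv ν x hx) hx
      obtain ⟨n, hnE, hn⟩ := heis_surj (θ + 1) (ν + 1) hc (E ν) hInv' k m hmE hk'
      refine ⟨f n, (partA ν).1 n hnE, ?_⟩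
      have : g (f n) = (θ + 1) n := by rw [← hmul]; rfl
      rw [this, hn]
end
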